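/- arXiv:2401.00419 — 8 statements merged into one kernel-verified Lean document; each statement's English description precedes it below -/
import Mathlib

section
/- Let p0 : {1,…,K} → {1,…,P} be a choice of optimal configurations, i.e. for every k ∈ {1,…,K} and every p ∈ {1,…,P} one has c_{p0(k),k} · p ≥ c_{p,k} · p0(k). Then for every feasible schedule x there exists a feasible schedule x' such that (i) x' has the same load as x at every period t (H'_t = H_t for all 1 ≤ t ≤ T), and (ii) for every k ∈ {1,…,K}, every t ∈ {1,…,T} and every p ∈ {1,…,P} with p ≠ p0(k), one has x'_{p,k,t} ≤ p0(k). -/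
/-- Given optimal configurations `p0`, every feasible schedule can be
transformed into a feasible schedule with the same load at every period and with
`x' p k t ≤ p0 k` for every non-optimal configuration `p ≠ p0 k`. -/
theorem multibot_optimal_configurations
    (K P T : ℕ) (hK : 1 ≤ K) (hP : 1 ≤ P) (hT : 1 ≤ T)
    (c : ℕ → ℕ → ℕ) (d : ℕ → ℕ)
    (p0 : ℕ → ℕ)
    (hp0mem : ∀ k ∈ Finset.Icc 1 K, p0 k ∈ Finset.Icc 1 P)
    (hp0opt : ∀ k ∈ Finset.Icc 1 K, ∀ p ∈ Finset.Icc 1 P,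
      c p k * p0 k ≤ c (p0 k) k * p)
    (x : ℕ → ℕ → ℕ → ℕ)
    (hfeas : ∀ k ∈ Finset.Icc 1 K,
      d k ≤ ∑ t ∈ Finset.Icc 1 T, ∑ p ∈ Finset.Icc 1 P, c p k * x p k t) :
    ∃ x' : ℕ → ℕ → ℕ → ℕ,
      (∀ k ∈ Finset.Icc 1 K,
        d k ≤ ∑ t ∈ Finset.Icc 1 T, ∑ p ∈ Finset.Icc 1 P, c p k * x' p k t) ∧
      (∀ t ∈ Finset.Icc 1 T,
        ∑ k ∈ Finset.Icc 1 K, ∑ p ∈ Finset.Icc 1 P, p * x' p k t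
          = ∑ k ∈ Finset.Icc 1 K, ∑ p ∈ Finset.Icc 1 P, p * x p k t) ∧
      (∀ k ∈ Finset.Icc 1 K, ∀ t ∈ Finset.Icc 1 T, ∀ p ∈ Finset.Icc 1 P,
        p ≠ p0 k → x' p k t ≤ p0 k) := by
  classical
  set x' : ℕ → ℕ → ℕ → ℕ := fun p k t =>
    if p = p0 k then
      x (p0 k) k t + ∑ q ∈ (Finset.Icc 1 P).erase (p0 k), q * (x q k t / p0 k)
    else x p k t % p0 k with hx'
  -- decomposition of the new inner sums
  have hsplit : ∀ k ∈ Finset.Icc 1 K, ∀ t, ∀ f : ℕ → ℕ,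
      ∑ p ∈ Finset.Icc 1 P, f p * x' p k t
        = f (p0 k) * x (p0 k) k t
          + f (p0 k) * ∑ q ∈ (Finset.Icc 1 P).erase (p0 k), q * (x q k t / p0 k)
          + ∑ q ∈ (Finset.Icc 1 P).erase (p0 k), f q * (x q k t % p0 k) := by
    intro k hk t f
    have h0 := hp0mem k hk
    rw [← Finset.add_sum_erase _ _ h0]
    have h1 : x' (p0 k) k t
        = x (p0 k) k t + ∑ q ∈ (Finset.Icc 1 P).erase (p0 k), q * (x q k t / p0 k) := by
      simp [hx']
    have h2 : ∑ q ∈ (Finset.Icc 1 P).erase (p0 k), f q * x' q k t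
        = ∑ q ∈ (Finset.Icc 1 P).erase (p0 k), f q * (x q k t % p0 k) := by
      refine Finset.sum_congr rfl fun q hq => ?_
      have : q ≠ p0 k := Finset.ne_of_mem_erase hq
      simp [hx', this]
    rw [h1, h2, Nat.mul_add]
  have hpos : ∀ k ∈ Finset.Icc 1 K, 0 < p0 k := by
    intro k hk
    have := hp0mem k hk
    simp only [Finset.mem_Icc] at this
    omega
  refine ⟨x', ?_, ?_, ?_⟩
  · -- feasibility
    intro k hk
    refine le_trans (hfeas k hk) (Finset.sum_le_sum fun t _ => ?_)
    have h0 := hp0mem k hk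
    rw [hsplit k hk t (fun p => c p k), ← Finset.add_sum_erase _ _ h0]
    have key : ∑ q ∈ (Finset.Icc 1 P).erase (p0 k), c q k * x q k t
        ≤ ∑ q ∈ (Finset.Icc 1 P).erase (p0 k),
            (c (p0 k) k * (q * (x q k t / p0 k)) + c q k * (x q k t % p0 k)) := by
      refine Finset.sum_le_sum fun q hq => ?_
      have hq' : q ∈ Finset.Icc 1 P := Finset.mem_of_mem_erase hq
      have hopt := hp0opt k hk q hq'
      have hdm := Nat.div_add_mod (x q k t) (p0 k)
      nlinarith [Nat.mul_le_mul_right (x q k t / p0 k) hopt]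
    rw [Finset.sum_add_distrib, ← Finset.mul_sum] at key
    omega
  · -- load preservation
    intro t _
    refine Finset.sum_congr rfl fun k hk => ?_
    have h0 := hp0mem k hk
    rw [hsplit k hk t (fun p => p), ← Finset.add_sum_erase _ _ h0]
    have key : ∀ q ∈ (Finset.Icc 1 P).erase (p0 k),
        p0 k * (q * (x q k t / p0 k)) + q * (x q k t % p0 k) = q * x q k t := by
      intro q hq
      have hdm := Nat.div_add_mod (x q k t) (p0 k)
      nlinarith
    calc p0 k * x (p0 k) k t
          + p0 k * ∑ q ∈ (Finset.Icc 1 P).erase (p0 k), q * (x q k t / p0 k)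
          + ∑ q ∈ (Finset.Icc 1 P).erase (p0 k), q * (x q k t % p0 k)
        = p0 k * x (p0 k) k t
          + ∑ q ∈ (Finset.Icc 1 P).erase (p0 k),
              (p0 k * (q * (x q k t / p0 k)) + q * (x q k t % p0 k)) := by
          rw [Finset.sum_add_distrib, ← Finset.mul_sum]; omega
      _ = p0 k * x (p0 k) k t + ∑ q ∈ (Finset.Icc 1 P).erase (p0 k), q * x q k t := by
          rw [Finset.sum_congr rfl key]
  · -- boundedness
    intro k hk t _ p _ hne
    have hpk := hpos k hk
    simp only [hx', if_neg hne]
    exact (Nat.mod_lt _ hpk).le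
end

section
/- Let λ ≥ 1 be an integer and let x be a feasible schedule whose load at every period t satisfies H_t ≤ λ. Then the packing π associated with x (π_{p,k} = ∑_{t=1}^T x_{p,k,t}) satisfies: (i) π satisfies all demands, i.e. ∑_{p=1}^P c_{p,k} · π_{p,k} ≥ d_k for every k; (ii) vol(π) ≤ λ · T; (iii) π_{p,k} = 0 whenever p > λ; and (iv) the doubled λ-scale of π is at most 2T, i.e. 2 · ∑_{k=1}^K ∑_{p : 3p > 2λ} π_{p,k} + ∑_{k=1}^K ∑_{p : λ < 3p ≤ 2λ} π_{p,k} ≤ 2T. -/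
open Finset

private lemma swap3 {α β γ : Type*} (A : Finset α) (B : Finset β) (C : Finset γ)
    (f : α → β → γ → ℕ) :
    ∑ a ∈ A, ∑ b ∈ B, ∑ c ∈ C, f a b c = ∑ c ∈ C, ∑ a ∈ A, ∑ b ∈ B, f a b c := by
  calc ∑ a ∈ A, ∑ b ∈ B, ∑ c ∈ C, f a b c
      = ∑ a ∈ A, ∑ c ∈ C, ∑ b ∈ B, f a b c :=
        Finset.sum_congr rfl fun a _ => Finset.sum_comm
    _ = ∑ c ∈ C, ∑ a ∈ A, ∑ b ∈ B, f a b c := Finset.sum_comm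

private lemma period_bound (K P L : ℕ) (hL : 1 ≤ L) (y : ℕ → ℕ → ℕ)
    (h : ∑ k ∈ Icc 1 K, ∑ p ∈ Icc 1 P, p * y p k ≤ L) :
    2 * (∑ k ∈ Icc 1 K, ∑ p ∈ (Icc 1 P).filter (fun p => 2 * L < 3 * p), y p k)
      + ∑ k ∈ Icc 1 K, ∑ p ∈ (Icc 1 P).filter (fun p => L < 3 * p ∧ 3 * p ≤ 2 * L), y p k
      ≤ 2 := by
  set B := ∑ k ∈ Icc 1 K, ∑ p ∈ (Icc 1 P).filter (fun p => 2 * L < 3 * p), y p k with hB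
  set M := ∑ k ∈ Icc 1 K, ∑ p ∈ (Icc 1 P).filter (fun p => L < 3 * p ∧ 3 * p ≤ 2 * L), y p k
    with hM
  have key : (2 * L + 1) * B + (L + 1) * M ≤ 3 * L := by
    have hk : ∀ k ∈ Icc 1 K,
        (2 * L + 1) * (∑ p ∈ (Icc 1 P).filter (fun p => 2 * L < 3 * p), y p k)
        + (L + 1) * (∑ p ∈ (Icc 1 P).filter (fun p => L < 3 * p ∧ 3 * p ≤ 2 * L), y p k)
        ≤ 3 * ∑ p ∈ Icc 1 P, p * y p k := by
      intro k _
      have h2 : (2 * L + 1) * (∑ p ∈ (Icc 1 P).filter (fun p => 2 * L < 3 * p), y p k)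
          ≤ ∑ p ∈ (Icc 1 P).filter (fun p => 2 * L < 3 * p), 3 * (p * y p k) := by
        rw [Finset.mul_sum]
        refine Finset.sum_le_sum fun p hp => ?_
        simp only [mem_filter] at hp
        calc (2 * L + 1) * y p k ≤ (3 * p) * y p k := Nat.mul_le_mul_right _ (by omega)
          _ = 3 * (p * y p k) := by ring
      have h1 : (L + 1) * (∑ p ∈ (Icc 1 P).filter (fun p => L < 3 * p ∧ 3 * p ≤ 2 * L), y p k)
          ≤ ∑ p ∈ (Icc 1 P).filter (fun p => L < 3 * p ∧ 3 * p ≤ 2 * L), 3 * (p * y p k) := by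
        rw [Finset.mul_sum]
        refine Finset.sum_le_sum fun p hp => ?_
        simp only [mem_filter] at hp
        calc (L + 1) * y p k ≤ (3 * p) * y p k := Nat.mul_le_mul_right _ (by omega)
          _ = 3 * (p * y p k) := by ring
      have hdisj : Disjoint ((Icc 1 P).filter (fun p => 2 * L < 3 * p))
          ((Icc 1 P).filter (fun p => L < 3 * p ∧ 3 * p ≤ 2 * L)) := by
        rw [Finset.disjoint_left]
        intro p hp hq
        simp only [mem_filter] at hp hq
        omega
      have hsub : ((Icc 1 P).filter (fun p => 2 * L < 3 * p))
          ∪ ((Icc 1 P).filter (fun p => L < 3 * p ∧ 3 * p ≤ 2 * L)) ⊆ Icc 1 P := by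
        apply Finset.union_subset <;> exact Finset.filter_subset _ _
      calc (2 * L + 1) * (∑ p ∈ (Icc 1 P).filter (fun p => 2 * L < 3 * p), y p k)
            + (L + 1) * (∑ p ∈ (Icc 1 P).filter (fun p => L < 3 * p ∧ 3 * p ≤ 2 * L), y p k)
          ≤ (∑ p ∈ (Icc 1 P).filter (fun p => 2 * L < 3 * p), 3 * (p * y p k))
            + ∑ p ∈ (Icc 1 P).filter (fun p => L < 3 * p ∧ 3 * p ≤ 2 * L), 3 * (p * y p k) :=
          Nat.add_le_add h2 h1
        _ = ∑ p ∈ ((Icc 1 P).filter (fun p => 2 * L < 3 * p))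
              ∪ ((Icc 1 P).filter (fun p => L < 3 * p ∧ 3 * p ≤ 2 * L)), 3 * (p * y p k) :=
          (Finset.sum_union hdisj).symm
        _ ≤ ∑ p ∈ Icc 1 P, 3 * (p * y p k) :=
          Finset.sum_le_sum_of_subset hsub
        _ = 3 * ∑ p ∈ Icc 1 P, p * y p k := (Finset.mul_sum _ _ _).symm
    calc (2 * L + 1) * B + (L + 1) * M
        = ∑ k ∈ Icc 1 K,
            ((2 * L + 1) * (∑ p ∈ (Icc 1 P).filter (fun p => 2 * L < 3 * p), y p k)
            + (L + 1) * (∑ p ∈ (Icc 1 P).filter (fun p => L < 3 * p ∧ 3 * p ≤ 2 * L), y p k)) := by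
          rw [Finset.sum_add_distrib, ← Finset.mul_sum, ← Finset.mul_sum]
      _ ≤ ∑ k ∈ Icc 1 K, 3 * ∑ p ∈ Icc 1 P, p * y p k := Finset.sum_le_sum hk
      _ = 3 * ∑ k ∈ Icc 1 K, ∑ p ∈ Icc 1 P, p * y p k := (Finset.mul_sum _ _ _).symm
      _ ≤ 3 * L := Nat.mul_le_mul_left _ h
  by_contra hc
  push_neg at hc
  have h3 : 3 ≤ 2 * B + M := hc
  have h4 : L * 3 ≤ L * (2 * B + M) := Nat.mul_le_mul_left _ h3
  nlinarith [key, h4, h3]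

/-- The packing associated with a feasible schedule whose loads are all
at most `L` satisfies the demands, has volume at most `L * T`, uses no configuration
larger than `L`, and has doubled `L`-scale at most `2 * T`. -/
theorem associated_packing_properties
    (K P T : ℕ) (hK : 1 ≤ K) (hP : 1 ≤ P) (hT : 1 ≤ T)
    (c : ℕ → ℕ → ℕ) (d : ℕ → ℕ)
    (L : ℕ) (hL : 1 ≤ L)
    (x : ℕ → ℕ → ℕ → ℕ)
    (hfeas : ∀ k ∈ Finset.Icc 1 K,
      d k ≤ ∑ t ∈ Finset.Icc 1 T, ∑ p ∈ Finset.Icc 1 P, c p k * x p k t)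
    (hload : ∀ t ∈ Finset.Icc 1 T,
      ∑ k ∈ Finset.Icc 1 K, ∑ p ∈ Finset.Icc 1 P, p * x p k t ≤ L) :
    (∀ k ∈ Finset.Icc 1 K,
      d k ≤ ∑ p ∈ Finset.Icc 1 P, c p k * (∑ t ∈ Finset.Icc 1 T, x p k t)) ∧
    (∑ k ∈ Finset.Icc 1 K, ∑ p ∈ Finset.Icc 1 P,
        p * (∑ t ∈ Finset.Icc 1 T, x p k t) ≤ L * T) ∧
    (∀ k ∈ Finset.Icc 1 K, ∀ p ∈ Finset.Icc 1 P, L < p →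
      (∑ t ∈ Finset.Icc 1 T, x p k t) = 0) ∧
    (2 * (∑ k ∈ Finset.Icc 1 K, ∑ p ∈ (Finset.Icc 1 P).filter (fun p => 2 * L < 3 * p),
            (∑ t ∈ Finset.Icc 1 T, x p k t))
      + (∑ k ∈ Finset.Icc 1 K,
          ∑ p ∈ (Finset.Icc 1 P).filter (fun p => L < 3 * p ∧ 3 * p ≤ 2 * L),
            (∑ t ∈ Finset.Icc 1 T, x p k t))
      ≤ 2 * T) := by
  refine ⟨?_, ?_, ?_, ?_⟩
  · intro k hk
    calc d k ≤ ∑ t ∈ Icc 1 T, ∑ p ∈ Icc 1 P, c p k * x p k t := hfeas k hk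
      _ = ∑ p ∈ Icc 1 P, ∑ t ∈ Icc 1 T, c p k * x p k t := Finset.sum_comm
      _ = ∑ p ∈ Icc 1 P, c p k * ∑ t ∈ Icc 1 T, x p k t := by
          simp [Finset.mul_sum]
  · calc ∑ k ∈ Icc 1 K, ∑ p ∈ Icc 1 P, p * ∑ t ∈ Icc 1 T, x p k t
        = ∑ t ∈ Icc 1 T, ∑ k ∈ Icc 1 K, ∑ p ∈ Icc 1 P, p * x p k t := by
          rw [← swap3 (Icc 1 K) (Icc 1 P) (Icc 1 T) (fun k p t => p * x p k t)]
          exact Finset.sum_congr rfl fun k _ => Finset.sum_congr rfl fun p _ =>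
            Finset.mul_sum _ _ _
      _ ≤ ∑ t ∈ Icc 1 T, L := Finset.sum_le_sum hload
      _ = L * T := by simp [Nat.mul_comm]
  · intro k hk p hp hLp
    refine Finset.sum_eq_zero fun t ht => ?_
    by_contra hx
    have hx1 : 1 ≤ x p k t := Nat.one_le_iff_ne_zero.mpr hx
    have hterm : p * x p k t ≤ L := by
      calc p * x p k t ≤ ∑ p ∈ Icc 1 P, p * x p k t :=
            Finset.single_le_sum (f := fun p => p * x p k t)
              (fun _ _ => Nat.zero_le _) hp
        _ ≤ ∑ k ∈ Icc 1 K, ∑ p ∈ Icc 1 P, p * x p k t :=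
            Finset.single_le_sum (f := fun k => ∑ p ∈ Icc 1 P, p * x p k t)
              (fun _ _ => Nat.zero_le _) hk
        _ ≤ L := hload t ht
    have : p ≤ p * x p k t := Nat.le_mul_of_pos_right _ hx1
    omega
  · have h1 : ∀ t ∈ Icc 1 T,
        2 * (∑ k ∈ Icc 1 K, ∑ p ∈ (Icc 1 P).filter (fun p => 2 * L < 3 * p), x p k t)
        + ∑ k ∈ Icc 1 K, ∑ p ∈ (Icc 1 P).filter (fun p => L < 3 * p ∧ 3 * p ≤ 2 * L), x p k t
        ≤ 2 := fun t ht => period_bound K P L hL (fun p k => x p k t) (hload t ht)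
    calc 2 * (∑ k ∈ Icc 1 K, ∑ p ∈ (Icc 1 P).filter (fun p => 2 * L < 3 * p),
            ∑ t ∈ Icc 1 T, x p k t)
          + ∑ k ∈ Icc 1 K, ∑ p ∈ (Icc 1 P).filter (fun p => L < 3 * p ∧ 3 * p ≤ 2 * L),
            ∑ t ∈ Icc 1 T, x p k t
        = ∑ t ∈ Icc 1 T,
            (2 * (∑ k ∈ Icc 1 K, ∑ p ∈ (Icc 1 P).filter (fun p => 2 * L < 3 * p), x p k t)
            + ∑ k ∈ Icc 1 K, ∑ p ∈ (Icc 1 P).filter (fun p => L < 3 * p ∧ 3 * p ≤ 2 * L),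
              x p k t) := by
          rw [swap3 (Icc 1 K) ((Icc 1 P).filter fun p => 2 * L < 3 * p) (Icc 1 T)
                (fun k p t => x p k t),
              swap3 (Icc 1 K) ((Icc 1 P).filter fun p => L < 3 * p ∧ 3 * p ≤ 2 * L) (Icc 1 T)
                (fun k p t => x p k t),
              Finset.mul_sum, ← Finset.sum_add_distrib]
      _ ≤ ∑ t ∈ Icc 1 T, 2 := Finset.sum_le_sum h1
      _ = 2 * T := by simp [Nat.mul_comm]
end

section
/- Let T ≥ 1 and λ ≥ 0 be integers, let I be a finite set of items with sizes s_i ∈ ℕ satisfying 3 · s_i ≤ λ for every i ∈ I, and suppose ∑_{i ∈ I} s_i ≤ T · λ. Then there exists an assignment f : I → {1,…,T} of the items to T boxes such that for every box t ∈ {1,…,T}, 3 · ∑_{i : f(i) = t} s_i ≤ 4λ. -/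
/-- Small items (each of size at most `L/3`) of total size at most `T * L`
can be assigned to `T` boxes so that every box load is at most `4L/3`. -/
theorem small_items_assignment
    (T L : ℕ) (hT : 1 ≤ T)
    (I : Type) [Fintype I] (s : I → ℕ)
    (hsmall : ∀ i : I, 3 * s i ≤ L)
    (hvol : ∑ i : I, s i ≤ T * L) :
    ∃ f : I → ℕ,
      (∀ i : I, f i ∈ Finset.Icc 1 T) ∧
      (∀ t ∈ Finset.Icc 1 T,
        3 * (∑ i ∈ Finset.univ.filter (fun i => f i = t), s i) ≤ 4 * L) := by
  classical
  suffices h : ∀ A : Finset I, ∃ f : I → ℕ,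
      (∀ i : I, f i ∈ Finset.Icc 1 T) ∧
      (∀ t ∈ Finset.Icc 1 T,
        3 * (∑ i ∈ A.filter (fun i => f i = t), s i) ≤ 4 * L) by
    obtain ⟨f, h1, h2⟩ := h Finset.univ
    exact ⟨f, h1, h2⟩
  intro A
  induction A using Finset.induction with
  | empty =>
      refine ⟨fun _ => 1, fun i => ?_, fun t ht => ?_⟩
      · simp [Finset.mem_Icc, hT]
      · simp
  | @insert a A' ha ih =>
      obtain ⟨f, hf1, hf2⟩ := ih
      have hsumA' : ∑ t ∈ Finset.Icc 1 T, ∑ i ∈ A'.filter (fun i => f i = t), s i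
          = ∑ i ∈ A', s i :=
        Finset.sum_fiberwise_of_maps_to (fun i _ => hf1 i) s
      have hA'le : ∑ i ∈ A', s i ≤ T * L :=
        le_trans (Finset.sum_le_sum_of_subset (Finset.subset_univ A')) hvol
      have hex : ∃ t₀ ∈ Finset.Icc 1 T, ∑ i ∈ A'.filter (fun i => f i = t₀), s i ≤ L := by
        by_contra hc
        push_neg at hc
        have hlt : T * L < ∑ t ∈ Finset.Icc 1 T, ∑ i ∈ A'.filter (fun i => f i = t), s i := by
          calc T * L = ∑ _t ∈ Finset.Icc 1 T, L := by
                simp [Nat.card_Icc, mul_comm]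
            _ < _ := Finset.sum_lt_sum_of_nonempty ⟨1, by simp [hT]⟩ (fun t ht => hc t ht)
        rw [hsumA'] at hlt
        exact absurd hlt (not_lt.2 hA'le)
      obtain ⟨t₀, ht₀, hload⟩ := hex
      refine ⟨Function.update f a t₀, ?_, ?_⟩
      · intro i
        by_cases h : i = a
        · subst h; simpa [Finset.mem_Icc] using ht₀
        · simp [Function.update_of_ne h, hf1 i]
      · intro t ht
        have hEq : A'.filter (fun i => Function.update f a t₀ i = t)
            = A'.filter (fun i => f i = t) :=
          Finset.filter_congr (fun i hi => by
            have hne : i ≠ a := fun h => ha (h ▸ hi)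
            simp [Function.update_of_ne hne])
        rw [Finset.filter_insert, hEq]
        by_cases h : t₀ = t
        · rw [if_pos (by simp [h])]
          rw [Finset.sum_insert (by simp [ha])]
          have h1 := hsmall a
          have h3 : 3 * ∑ i ∈ A'.filter (fun i => f i = t), s i ≤ 3 * L := by
            rw [← h]; exact Nat.mul_le_mul_left 3 hload
          omega
        · rw [if_neg (by simp [h])]
          exact hf2 t ht
end

section
/- Let H be an integer with 3P ≤ H, and let π be a packing whose volume satisfies vol(π) ≤ T · H. Then there exists a schedule y such that (i) ∑_{t=1}^T y_{p,k,t} = π_{p,k} for all p ∈ {1,…,P} and k ∈ {1,…,K} (so y processes exactly the configurations of π, and in particular y is feasible whenever π satisfies all demands), and (ii) the load of y at every period t satisfies 3 · H_t ≤ 4H. -/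
private lemma mbIco_disj {a b c d : ℕ} (h : b ≤ c) :
    Disjoint (Finset.Ico a b) (Finset.Ico c d) := by
  rw [Finset.disjoint_left]
  intro x hx hx'
  rw [Finset.mem_Ico] at hx hx'
  omega

private lemma mbSum_range_mul (K : ℕ) (hK : 0 < K) (f : ℕ → ℕ → ℕ) (P : ℕ) :
    ∑ m ∈ Finset.range (P * K), f (m / K) (m % K) =
      ∑ p ∈ Finset.range P, ∑ k ∈ Finset.range K, f p k := by
  induction P with
  | zero => simp
  | succ n ih =>
    rw [Finset.sum_range_succ, ← ih, Nat.succ_mul, Finset.range_eq_Ico,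
      ← Finset.sum_Ico_consecutive _ (Nat.zero_le (n * K)) (Nat.le_add_right _ K),
      ← Finset.range_eq_Ico]
    congr 1
    rw [Finset.sum_Ico_eq_sum_range]
    simp only [Nat.add_sub_cancel_left]
    refine Finset.sum_congr rfl fun j hj => ?_
    rw [Finset.mem_range] at hj
    rw [mul_comm n K, Nat.mul_add_div hK, Nat.mul_add_mod, Nat.div_eq_of_lt hj,
      Nat.mod_eq_of_lt hj, add_zero]

private lemma mbShift (n : ℕ) (f : ℕ → ℕ) :
    ∑ i ∈ Finset.Icc 1 n, f i = ∑ i ∈ Finset.range n, f (i + 1) := by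
  rw [← Finset.Ico_add_one_right_eq_Icc, Finset.sum_Ico_eq_sum_range]
  exact Finset.sum_congr (by norm_num) fun i _ => by rw [add_comm]

private lemma mbReindex (K P : ℕ) (hK : 0 < K) (G : ℕ → ℕ → ℕ) :
    ∑ k ∈ Finset.Icc 1 K, ∑ p ∈ Finset.Icc 1 P, G p k =
      ∑ m ∈ Finset.range (P * K), G (m / K + 1) (m % K + 1) := by
  calc ∑ k ∈ Finset.Icc 1 K, ∑ p ∈ Finset.Icc 1 P, G p k
      = ∑ k ∈ Finset.range K, ∑ p ∈ Finset.range P, G (p + 1) (k + 1) := by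
        rw [mbShift]
        exact Finset.sum_congr rfl fun k _ => mbShift P (fun p => G p (k + 1))
    _ = ∑ p ∈ Finset.range P, ∑ k ∈ Finset.range K, G (p + 1) (k + 1) := Finset.sum_comm
    _ = _ := (mbSum_range_mul K hK (fun p k => G (p + 1) (k + 1)) P).symm

private def mbW (K : ℕ) (pi : ℕ → ℕ → ℕ) (m : ℕ) : ℕ :=
  (m / K + 1) * pi (m / K + 1) (m % K + 1)

private def mbA (K : ℕ) (pi : ℕ → ℕ → ℕ) (m : ℕ) : ℕ :=
  ∑ i ∈ Finset.range m, mbW K pi i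

private lemma mbA_succ (K : ℕ) (pi : ℕ → ℕ → ℕ) (m : ℕ) :
    mbA K pi (m + 1) = mbA K pi m + mbW K pi m :=
  Finset.sum_range_succ _ m

private lemma mbA_mono (K : ℕ) (pi : ℕ → ℕ → ℕ) {m n : ℕ} (h : m ≤ n) :
    mbA K pi m ≤ mbA K pi n :=
  Finset.sum_le_sum_of_subset (Finset.range_subset_range.mpr h)


/-- If `3P ≤ H` and packing `π` has volume at most `T * H`, then `π` can be
scheduled into `T` periods with every period load at most `4H/3`. -/
theorem packing_schedulable_large_H
    (K P T H : ℕ) (hK : 1 ≤ K) (hP : 1 ≤ P) (hT : 1 ≤ T)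
    (hH : 3 * P ≤ H)
    (pi : ℕ → ℕ → ℕ)
    (hvol : ∑ k ∈ Finset.Icc 1 K, ∑ p ∈ Finset.Icc 1 P, p * pi p k ≤ T * H) :
    ∃ y : ℕ → ℕ → ℕ → ℕ,
      (∀ p ∈ Finset.Icc 1 P, ∀ k ∈ Finset.Icc 1 K,
        ∑ t ∈ Finset.Icc 1 T, y p k t = pi p k) ∧
      (∀ t ∈ Finset.Icc 1 T,
        3 * (∑ k ∈ Finset.Icc 1 K, ∑ p ∈ Finset.Icc 1 P, p * y p k t) ≤ 4 * H) := by
  have hK0 : 0 < K := hK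
  have hH0 : 0 < H := by omega
  have htot : mbA K pi (P * K) ≤ T * H := by
    have h := mbReindex K P hK0 (fun p k => p * pi p k)
    calc mbA K pi (P * K)
        = ∑ m ∈ Finset.range (P * K), (m / K + 1) * pi (m / K + 1) (m % K + 1) := rfl
      _ = ∑ k ∈ Finset.Icc 1 K, ∑ p ∈ Finset.Icc 1 P, p * pi p k := h.symm
      _ ≤ T * H := hvol
  refine ⟨fun p k t => ((Finset.range (pi p k)).filter
      (fun j => (mbA K pi ((p - 1) * K + (k - 1)) + j * p) / H + 1 = t)).card, ?_, ?_⟩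
  · -- part (i)
    intro p hp k hk
    rw [Finset.mem_Icc] at hp hk
    have hkK : k - 1 < K := by omega
    have hdiv : ((p - 1) * K + (k - 1)) / K = p - 1 := by
      rw [show (p - 1) * K + (k - 1) = K * (p - 1) + (k - 1) by ring,
        Nat.mul_add_div hK0, Nat.div_eq_of_lt hkK, add_zero]
    have hmod : ((p - 1) * K + (k - 1)) % K = k - 1 := by
      rw [show (p - 1) * K + (k - 1) = K * (p - 1) + (k - 1) by ring,
        Nat.mul_add_mod, Nat.mod_eq_of_lt hkK]
    have hW : mbW K pi ((p - 1) * K + (k - 1)) = p * pi p k := by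
      unfold mbW
      rw [hdiv, hmod, show p - 1 + 1 = p by omega, show k - 1 + 1 = k by omega]
    have hm1 : (p - 1) * K + (k - 1) + 1 ≤ P * K := by
      have h1 : (p - 1) * K + (k - 1) + 1 ≤ (p - 1) * K + K := by
        have := Nat.add_le_add_left (Nat.succ_le_of_lt hkK) ((p - 1) * K)
        omega
      have h2 : (p - 1) * K + K = p * K := by
        obtain ⟨q, rfl⟩ : ∃ q, p = q + 1 := ⟨p - 1, by omega⟩
        simp [Nat.succ_mul]
      have h3 : p * K ≤ P * K := Nat.mul_le_mul_right K hp.2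
      omega
    have hfib : ∀ j ∈ Finset.range (pi p k),
        (mbA K pi ((p - 1) * K + (k - 1)) + j * p) / H + 1 ∈ Finset.Icc 1 T := by
      intro j hj
      rw [Finset.mem_range] at hj
      have hend : mbA K pi ((p - 1) * K + (k - 1)) + j * p + p ≤ T * H := by
        calc mbA K pi ((p - 1) * K + (k - 1)) + j * p + p
            = mbA K pi ((p - 1) * K + (k - 1)) + (j + 1) * p := by ring
          _ ≤ mbA K pi ((p - 1) * K + (k - 1)) + pi p k * p :=
              Nat.add_le_add_left (mul_le_mul_left (Nat.succ_le_of_lt hj) p) _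
          _ = mbA K pi ((p - 1) * K + (k - 1) + 1) := by rw [mbA_succ, hW, mul_comm (pi p k) p]
          _ ≤ mbA K pi (P * K) := mbA_mono K pi hm1
          _ ≤ T * H := htot
      have hlt : mbA K pi ((p - 1) * K + (k - 1)) + j * p < T * H :=
        lt_of_lt_of_le (Nat.lt_add_of_pos_right (by omega : 0 < p)) hend
      have hdlt : (mbA K pi ((p - 1) * K + (k - 1)) + j * p) / H < T :=
        (Nat.div_lt_iff_lt_mul hH0).mpr hlt
      rw [Finset.mem_Icc]
      exact ⟨Nat.le_add_left 1 _, hdlt⟩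
    have h := Finset.card_eq_sum_card_fiberwise hfib
    rw [Finset.card_range] at h
    exact h.symm
  · -- part (ii)
    intro t ht
    rw [Finset.mem_Icc] at ht
    obtain ⟨u, rfl⟩ : ∃ u, t = u + 1 := ⟨t - 1, by omega⟩
    rw [mbReindex K P hK0 (fun p k => p * ((Finset.range (pi p k)).filter
      (fun j => (mbA K pi ((p - 1) * K + (k - 1)) + j * p) / H + 1 = u + 1)).card)]
    have hmm : ∀ m : ℕ, (m / K + 1 - 1) * K + (m % K + 1 - 1) = m := by
      intro m
      simp only [Nat.add_sub_cancel]
      rw [mul_comm]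
      exact Nat.div_add_mod m K
    have hrw : ∀ m : ℕ, (m / K + 1) * ((Finset.range (pi (m / K + 1) (m % K + 1))).filter
        (fun j => (mbA K pi ((m / K + 1 - 1) * K + (m % K + 1 - 1)) + j * (m / K + 1)) / H + 1
          = u + 1)).card
        = (m / K + 1) * ((Finset.range (pi (m / K + 1) (m % K + 1))).filter
        (fun j => (mbA K pi m + j * (m / K + 1)) / H + 1 = u + 1)).card := by
      intro m
      rw [hmm m]
    rw [Finset.sum_congr rfl fun m _ => hrw m]
    -- abbreviations
    set N := P * K with hN
    set F : ℕ → Finset ℕ := fun m => (Finset.range (pi (m / K + 1) (m % K + 1))).filter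
      (fun j => (mbA K pi m + j * (m / K + 1)) / H + 1 = u + 1) with hF
    set I : (Σ _ : ℕ, ℕ) → Finset ℕ := fun x =>
      Finset.Ico (mbA K pi x.1 + x.2 * (x.1 / K + 1))
        (mbA K pi x.1 + x.2 * (x.1 / K + 1) + (x.1 / K + 1)) with hI
    have hFmem : ∀ m : ℕ, ∀ j ∈ F m,
        j < pi (m / K + 1) (m % K + 1) ∧ (mbA K pi m + j * (m / K + 1)) / H = u := by
      intro m j hj
      rw [hF, Finset.mem_filter, Finset.mem_range] at hj
      exact ⟨hj.1, by omega⟩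
    have hord : ∀ m j m' j' : ℕ, j < pi (m / K + 1) (m % K + 1) →
        (m < m' ∨ (m = m' ∧ j < j')) →
        mbA K pi m + j * (m / K + 1) + (m / K + 1) ≤ mbA K pi m' + j' * (m' / K + 1) := by
      intro m j m' j' hj hlt
      rcases hlt with h | ⟨rfl, h⟩
      · calc mbA K pi m + j * (m / K + 1) + (m / K + 1)
            = mbA K pi m + (j + 1) * (m / K + 1) := by ring
          _ ≤ mbA K pi m + pi (m / K + 1) (m % K + 1) * (m / K + 1) :=
              Nat.add_le_add_left (mul_le_mul_left (Nat.succ_le_of_lt hj) _) _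
          _ = mbA K pi (m + 1) := by
              rw [mbA_succ]; unfold mbW
              rw [mul_comm (pi (m / K + 1) (m % K + 1)) (m / K + 1)]
          _ ≤ mbA K pi m' := mbA_mono K pi h
          _ ≤ mbA K pi m' + j' * (m' / K + 1) := Nat.le_add_right _ _
      · calc mbA K pi m + j * (m / K + 1) + (m / K + 1)
            = mbA K pi m + (j + 1) * (m / K + 1) := by ring
          _ ≤ mbA K pi m + j' * (m / K + 1) :=
              Nat.add_le_add_left (mul_le_mul_left (Nat.succ_le_of_lt h) _) _
    have hdisj : ∀ x ∈ (Finset.range N).sigma F, ∀ y ∈ (Finset.range N).sigma F,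
        x ≠ y → Disjoint (I x) (I y) := by
      rintro ⟨m, j⟩ hx ⟨m', j'⟩ hy hne
      rw [Finset.mem_sigma] at hx hy
      have hj := hFmem m j hx.2
      have hj' := hFmem m' j' hy.2
      rcases Nat.lt_trichotomy m m' with h | rfl | h
      · exact mbIco_disj (hord m j m' j' hj.1 (Or.inl h))
      · rcases Nat.lt_trichotomy j j' with h | rfl | h
        · exact mbIco_disj (hord m j m j' hj.1 (Or.inr ⟨rfl, h⟩))
        · exact absurd rfl hne
        · exact (mbIco_disj (hord m j' m j hj'.1 (Or.inr ⟨rfl, h⟩))).symm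
      · exact (mbIco_disj (hord m' j' m j hj'.1 (Or.inl h))).symm
    have key : (∑ m ∈ Finset.range N, (m / K + 1) * (F m).card) ≤ H + P := by
      have e0 : ∀ m ∈ Finset.range N, (m / K + 1) * (F m).card
          = ∑ j ∈ F m, (m / K + 1) := by
        intro m _
        rw [Finset.sum_const, smul_eq_mul, mul_comm]
      rw [Finset.sum_congr rfl e0,
        Finset.sum_sigma' (Finset.range N) F (fun m _ => m / K + 1)]
      have e2 : ∀ x ∈ (Finset.range N).sigma F, (x.1 / K + 1) = (I x).card := by
        intro x _
        rw [hI]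
        simp [Nat.card_Ico]
      rw [Finset.sum_congr rfl e2, ← Finset.card_biUnion hdisj]
      have hsub : ((Finset.range N).sigma F).biUnion I ⊆
          Finset.Ico (u * H) (u * H + (H + P)) := by
        intro x hx
        rw [Finset.mem_biUnion] at hx
        obtain ⟨z, hz, hxI⟩ := hx
        rw [Finset.mem_sigma] at hz
        obtain ⟨hz1, hz2⟩ := hz
        have hfm := hFmem z.1 z.2 hz2
        rw [Finset.mem_range] at hz1
        have hpm : z.1 / K + 1 ≤ P :=
          Nat.succ_le_of_lt ((Nat.div_lt_iff_lt_mul hK0).mpr hz1)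
        rw [hI, Finset.mem_Ico] at hxI
        have hs1 : u * H ≤ mbA K pi z.1 + z.2 * (z.1 / K + 1) := by
          calc u * H = (mbA K pi z.1 + z.2 * (z.1 / K + 1)) / H * H := by rw [hfm.2]
            _ ≤ _ := Nat.div_mul_le_self _ H
        have hs2 : mbA K pi z.1 + z.2 * (z.1 / K + 1) < (u + 1) * H :=
          (Nat.div_lt_iff_lt_mul hH0).mp (by rw [hfm.2]; exact Nat.lt_succ_self u)
        rw [Finset.mem_Ico]
        constructor
        · exact le_trans hs1 hxI.1
        · calc x < mbA K pi z.1 + z.2 * (z.1 / K + 1) + (z.1 / K + 1) := hxI.2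
            _ ≤ mbA K pi z.1 + z.2 * (z.1 / K + 1) + P := Nat.add_le_add_left hpm _
            _ < (u + 1) * H + P := Nat.add_lt_add_right hs2 P
            _ = u * H + (H + P) := by ring
      calc (((Finset.range N).sigma F).biUnion I).card
          ≤ (Finset.Ico (u * H) (u * H + (H + P))).card := Finset.card_le_card hsub
        _ = H + P := by simp [Nat.card_Ico]
    show 3 * (∑ m ∈ Finset.range N, (m / K + 1) * (F m).card) ≤ 4 * H
    omega
end

section
/- Let T ≥ 1 and λ ≥ 1 be integers, let I be a finite set of items with sizes s_i ∈ ℕ satisfying s_i ≤ λ for every i ∈ I, suppose ∑_{i ∈ I} s_i ≤ T · λ, and suppose the scale condition 2 · |{i ∈ I : 3·s_i > 2λ}| + |{i ∈ I : λ < 3·s_i ≤ 2λ}| ≤ 2T holds. Then there exists an assignment f : I → {1,…,T} of the items to T boxes such that for every box t ∈ {1,…,T}, 3 · ∑_{i : f(i) = t} s_i ≤ 4λ. -/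
lemma pack_lemma {I : Type} [DecidableEq I] (A : Finset I) (c : ℕ) (hc : 0 < c) :
    ∃ h : I → ℕ,
      (∀ i ∈ A, 1 ≤ h i ∧ h i ≤ (A.card + c - 1) / c) ∧
      ∀ t : ℕ, (A.filter (fun i => h i = t)).card ≤ c := by
  classical
  set E : I → ℕ := fun i => if hi : i ∈ A then ((A.equivFin ⟨i, hi⟩ : Fin A.card) : ℕ) else 0
    with hE
  refine ⟨fun i => E i / c + 1, ?_, ?_⟩
  · intro i hi
    have hEi : E i < A.card := by
      simp only [hE, dif_pos hi]
      exact (A.equivFin ⟨i, hi⟩).isLt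
    refine ⟨Nat.le_add_left 1 _, ?_⟩
    calc E i / c + 1 ≤ (A.card - 1) / c + 1 :=
          Nat.add_le_add_right (Nat.div_le_div_right (by omega)) 1
      _ = (A.card - 1 + c) / c := (Nat.add_div_right _ hc).symm
      _ = (A.card + c - 1) / c := by congr 1; omega
  · intro t
    rcases Nat.eq_zero_or_pos t with rfl | ht
    · have : A.filter (fun i => E i / c + 1 = 0) = ∅ :=
        Finset.filter_false_of_mem (fun i _ => Nat.succ_ne_zero _)
      simp [this]
    · have hsub : ∀ i ∈ A.filter (fun i => E i / c + 1 = t),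
          E i ∈ Finset.Ico (c * (t - 1)) (c * (t - 1) + c) := by
        intro i hi
        simp only [Finset.mem_filter] at hi
        set q := E i / c with hq
        have hd : q = t - 1 := by omega
        have heq : E i = c * (t - 1) + E i % c := by
          rw [← hd, hq]; exact (Nat.div_add_mod (E i) c).symm
        have hm : E i % c < c := Nat.mod_lt _ hc
        simp only [Finset.mem_Ico]
        exact ⟨heq ▸ Nat.le_add_right _ _, heq ▸ Nat.add_lt_add_left hm _⟩
      have hinj : Set.InjOn E (A.filter (fun i => E i / c + 1 = t) : Finset I) := by
        intro x hx y hy hxy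
        have hxA : x ∈ A := (Finset.mem_filter.mp (Finset.mem_coe.mp hx)).1
        have hyA : y ∈ A := (Finset.mem_filter.mp (Finset.mem_coe.mp hy)).1
        simp only [hE, dif_pos hxA, dif_pos hyA] at hxy
        have := A.equivFin.injective (Fin.val_injective hxy)
        exact Subtype.ext_iff.mp this
      calc (A.filter (fun i => E i / c + 1 = t)).card
          ≤ (Finset.Ico (c * (t - 1)) (c * (t - 1) + c)).card :=
            Finset.card_le_card_of_injOn E hsub hinj
        _ = c := by simp

lemma small_assign {I : Type} (T L : ℕ) (hT : 1 ≤ T) (s : I → ℕ) (S : Finset I) :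
    ∀ w : ℕ → ℕ,
      (∀ i ∈ S, 3 * s i ≤ L) →
      ((∑ t ∈ Finset.Icc 1 T, w t) + ∑ i ∈ S, s i ≤ T * L) →
      (∀ t, 3 * w t ≤ 4 * L) →
      ∃ g : I → ℕ, (∀ i ∈ S, g i ∈ Finset.Icc 1 T) ∧
        ∀ t ∈ Finset.Icc 1 T,
          3 * (w t + ∑ i ∈ S.filter (fun i => g i = t), s i) ≤ 4 * L := by
  classical
  induction S using Finset.induction_on with
  | empty =>
    intro w _ _ hw
    exact ⟨fun _ => 1, by simp, fun t ht => by simpa using hw t⟩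
  | @insert a S' ha ih =>
    intro w hsmall hvol hw
    have hsa : 3 * s a ≤ L := hsmall a (Finset.mem_insert_self a S')
    have hvol2 : (∑ t ∈ Finset.Icc 1 T, w t) + (s a + ∑ i ∈ S', s i) ≤ T * L := by
      rwa [Finset.sum_insert ha] at hvol
    obtain ⟨t0, ht0, hwt0⟩ : ∃ t ∈ Finset.Icc 1 T, w t ≤ L := by
      by_contra hcon
      push_neg at hcon
      have hall : ∀ t ∈ Finset.Icc 1 T, L + 1 ≤ w t := fun t ht => hcon t ht
      have hsum : (Finset.Icc 1 T).card * (L + 1) ≤ ∑ t ∈ Finset.Icc 1 T, w t := by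
        simpa [mul_comm] using Finset.card_nsmul_le_sum _ _ _ hall
      have hcard : (Finset.Icc 1 T).card = T := by simp
      rw [hcard] at hsum
      have h2 : T * (L + 1) = T * L + T := by ring
      omega
    set w' : ℕ → ℕ := fun t => if t = t0 then w t + s a else w t with hw'def
    have hw'sum : ∑ t ∈ Finset.Icc 1 T, w' t = (∑ t ∈ Finset.Icc 1 T, w t) + s a := by
      have h1 : ∀ t, w' t = w t + (if t = t0 then s a else 0) := by
        intro t; by_cases h : t = t0 <;> simp [hw'def, h]
      simp only [h1, Finset.sum_add_distrib,
        Finset.sum_ite_eq' (Finset.Icc 1 T) t0 (fun _ => s a), if_pos ht0]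
    obtain ⟨g', hg'mem, hg'⟩ := ih w'
      (fun i hi => hsmall i (Finset.mem_insert_of_mem hi))
      (by rw [hw'sum]; omega)
      (by
        intro t
        by_cases h : t = t0
        · subst h; simp only [hw'def, if_pos rfl]; omega
        · simp only [hw'def, if_neg h]; exact hw t)
    refine ⟨fun j => if j = a then t0 else g' j, ?_, ?_⟩
    · intro i hi
      by_cases h : i = a
      · simp [h, ht0]
      · rcases Finset.mem_insert.mp hi with rfl | hi'
        · exact absurd rfl h
        · simpa [h] using hg'mem i hi'
    · intro t ht
      have hfc : S'.filter (fun i => (if i = a then t0 else g' i) = t)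
          = S'.filter (fun i => g' i = t) :=
        Finset.filter_congr (fun i hi => by
          simp [show i ≠ a from fun h => ha (h ▸ hi)])
      by_cases hta : t0 = t
      · have hfe : (insert a S').filter (fun i => (if i = a then t0 else g' i) = t)
            = insert a (S'.filter fun i => g' i = t) := by
          rw [Finset.filter_insert, if_pos (by simp [hta]), hfc]
        rw [hfe, Finset.sum_insert (fun h => ha (Finset.mem_of_mem_filter a h))]
        have hb := hg' t ht
        have hwt : w' t = w t + s a := by simp [hw'def, hta.symm]
        omega
      · have hfe : (insert a S').filter (fun i => (if i = a then t0 else g' i) = t)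
            = S'.filter fun i => g' i = t := by
          rw [Finset.filter_insert, if_neg (by simp [hta]), hfc]
        rw [hfe]
        have hb := hg' t ht
        have hwt : w' t = w t := by
          simp only [hw'def]; exact if_neg fun h => hta h.symm
        omega

/-- Items of size at most `L`, of total size at most `T * L`, satisfying the
scale condition (number of big items plus half the number of medium items at most `T`),
can be assigned to `T` boxes so that every box load is at most `4L/3`. -/
theorem items_assignment_with_scale
    (T L : ℕ) (hT : 1 ≤ T) (hL : 1 ≤ L)
    (I : Type) [Fintype I] (s : I → ℕ)
    (hmax : ∀ i : I, s i ≤ L)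
    (hvol : ∑ i : I, s i ≤ T * L)
    (hscale : 2 * (Finset.univ.filter (fun i : I => 2 * L < 3 * s i)).card
        + (Finset.univ.filter (fun i : I => L < 3 * s i ∧ 3 * s i ≤ 2 * L)).card
        ≤ 2 * T) :
    ∃ f : I → ℕ,
      (∀ i : I, f i ∈ Finset.Icc 1 T) ∧
      (∀ t ∈ Finset.Icc 1 T,
        3 * (∑ i ∈ Finset.univ.filter (fun i => f i = t), s i) ≤ 4 * L) := by
  classical
  set B := Finset.univ.filter (fun i : I => 2 * L < 3 * s i) with hBdef
  set M := Finset.univ.filter (fun i : I => L < 3 * s i ∧ 3 * s i ≤ 2 * L) with hMdef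
  set Sm := Finset.univ.filter (fun i : I => 3 * s i ≤ L) with hSmdef
  obtain ⟨fB, hfBb, hfBc⟩ := pack_lemma B 1 one_pos
  obtain ⟨fM, hfMb, hfMc⟩ := pack_lemma M 2 two_pos
  set b := B.card with hbdef
  set m := M.card with hmdef
  have hscale' : 2 * b + m ≤ 2 * T := hscale
  have hbT : b ≤ T := by omega
  have hfBb' : ∀ i ∈ B, 1 ≤ fB i ∧ fB i ≤ b := by
    intro i hi
    have h2 := hfBb i hi
    omega
  have hfMb' : ∀ i ∈ M, 1 ≤ fM i ∧ b + fM i ≤ T := by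
    intro i hi
    have h2 := hfMb i hi
    omega
  set f₀ : I → ℕ := fun i => if 2 * L < 3 * s i then fB i else b + fM i with hf₀def
  have hBcond : ∀ i ∈ B, 2 * L < 3 * s i := by
    intro i hi; rw [hBdef] at hi; exact (Finset.mem_filter.mp hi).2
  have hMcond : ∀ i ∈ M, L < 3 * s i ∧ 3 * s i ≤ 2 * L := by
    intro i hi; rw [hMdef] at hi; exact (Finset.mem_filter.mp hi).2
  have hSmcond : ∀ i ∈ Sm, 3 * s i ≤ L := by
    intro i hi; rw [hSmdef] at hi; exact (Finset.mem_filter.mp hi).2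
  have hf₀B : ∀ i ∈ B, f₀ i = fB i := by
    intro i hi; simp only [hf₀def]; exact if_pos (hBcond i hi)
  have hf₀M : ∀ i ∈ M, f₀ i = b + fM i := by
    intro i hi; simp only [hf₀def]; exact if_neg (by have := hMcond i hi; omega)
  have hmapsf₀ : ∀ i ∈ B ∪ M, f₀ i ∈ Finset.Icc 1 T := by
    intro i hi
    rcases Finset.mem_union.mp hi with h | h
    · rw [hf₀B i h, Finset.mem_Icc]
      have := hfBb' i h; omega
    · rw [hf₀M i h, Finset.mem_Icc]
      have := hfMb' i h; omega
  set w : ℕ → ℕ := fun t => ∑ i ∈ (B ∪ M).filter (fun i => f₀ i = t), s i with hwdef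
  have hBMdisj : Disjoint B M := by
    rw [Finset.disjoint_left]
    intro i hi hj
    have h1 := hBcond i hi
    have h2 := hMcond i hj
    omega
  have hwsplit : ∀ t, w t = (∑ i ∈ B.filter (fun i => f₀ i = t), s i)
      + (∑ i ∈ M.filter (fun i => f₀ i = t), s i) := by
    intro t
    simp only [hwdef]
    rw [Finset.filter_union,
      Finset.sum_union (Finset.disjoint_filter_filter hBMdisj)]
  have hw4 : ∀ t, 3 * w t ≤ 4 * L := by
    intro t
    rcases le_or_gt t b with htb | htb
    · have hMempty : M.filter (fun i => f₀ i = t) = ∅ :=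
        Finset.filter_false_of_mem (fun i hi => by
          rw [hf₀M i hi]
          have := hfMb' i hi
          omega)
      have hfeq : B.filter (fun i => f₀ i = t) = B.filter (fun i => fB i = t) :=
        Finset.filter_congr (fun i hi => by rw [hf₀B i hi])
      have hBsum : ∑ i ∈ B.filter (fun i => f₀ i = t), s i ≤ L := by
        rw [hfeq]
        calc ∑ i ∈ B.filter (fun i => fB i = t), s i
            ≤ (B.filter (fun i => fB i = t)).card * L := by
              simpa [mul_comm] using
                Finset.sum_le_card_nsmul _ _ L (fun i _ => hmax i)
          _ ≤ 1 * L := Nat.mul_le_mul_right L (hfBc t)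
          _ = L := one_mul L
      rw [hwsplit t, hMempty]
      simp only [Finset.sum_empty, add_zero]
      omega
    · have hBempty : B.filter (fun i => f₀ i = t) = ∅ :=
        Finset.filter_false_of_mem (fun i hi => by
          rw [hf₀B i hi]
          have := hfBb' i hi
          omega)
      have hsub : M.filter (fun i => f₀ i = t) ⊆ M.filter (fun i => fM i = t - b) := by
        intro i hi
        have hiM := Finset.mem_of_mem_filter i hi
        have hieq := (Finset.mem_filter.mp hi).2
        rw [hf₀M i hiM] at hieq
        exact Finset.mem_filter.mpr ⟨hiM, by omega⟩
      have hcard2 : (M.filter (fun i => f₀ i = t)).card ≤ 2 :=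
        le_trans (Finset.card_le_card hsub) (hfMc (t - b))
      have h1 : ∑ i ∈ M.filter (fun i => f₀ i = t), 3 * s i
          ≤ (M.filter (fun i => f₀ i = t)).card * (2 * L) := by
        simpa [mul_comm] using Finset.sum_le_card_nsmul _ _ (2 * L)
          (fun i hi => (hMcond i (Finset.mem_of_mem_filter i hi)).2)
      have h2 : (M.filter (fun i => f₀ i = t)).card * (2 * L) ≤ 2 * (2 * L) :=
        Nat.mul_le_mul_right (2 * L) hcard2
      rw [hwsplit t, hBempty]
      simp only [Finset.sum_empty, zero_add]
      rw [Finset.mul_sum]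
      omega
  have hwsum : ∑ t ∈ Finset.Icc 1 T, w t = ∑ i ∈ B ∪ M, s i :=
    Finset.sum_fiberwise_of_maps_to hmapsf₀ s
  have hcover : (B ∪ M) ∪ Sm = Finset.univ := by
    ext i
    simp only [Finset.mem_union, hBdef, hMdef, hSmdef, Finset.mem_filter,
      Finset.mem_univ, true_and, iff_true]
    omega
  have hdisj2 : Disjoint (B ∪ M) Sm := by
    rw [Finset.disjoint_left]
    intro i hi hj
    have h2 := hSmcond i hj
    rcases Finset.mem_union.mp hi with h | h
    · have := hBcond i h; omega
    · have := hMcond i h; omega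
  have htotal : (∑ i ∈ B ∪ M, s i) + ∑ i ∈ Sm, s i ≤ T * L := by
    rw [← Finset.sum_union hdisj2, hcover]
    exact hvol
  obtain ⟨g, hgmem, hg⟩ := small_assign T L hT s Sm w hSmcond
    (by rw [hwsum]; exact htotal) hw4
  set f : I → ℕ := fun i =>
    if 2 * L < 3 * s i then fB i else if L < 3 * s i then b + fM i else g i with hfdef
  have hff₀ : ∀ i ∈ B ∪ M, f i = f₀ i := by
    intro i hi
    rcases Finset.mem_union.mp hi with h | h
    · have hc := hBcond i h
      simp only [hfdef, hf₀def, if_pos hc]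
    · have hc := hMcond i h
      have hA : ¬ 2 * L < 3 * s i := by omega
      simp only [hfdef, hf₀def, if_neg hA, if_pos hc.1]
  have hfg : ∀ i ∈ Sm, f i = g i := by
    intro i hi
    have hc := hSmcond i hi
    have hA : ¬ 2 * L < 3 * s i := by omega
    have hB2 : ¬ L < 3 * s i := by omega
    simp only [hfdef, if_neg hA, if_neg hB2]
  refine ⟨f, ?_, ?_⟩
  · intro i
    by_cases h1 : 2 * L < 3 * s i
    · have hiB : i ∈ B := by rw [hBdef]; exact Finset.mem_filter.mpr ⟨Finset.mem_univ i, h1⟩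
      rw [hff₀ i (Finset.mem_union_left _ hiB)]
      exact hmapsf₀ i (Finset.mem_union_left _ hiB)
    · by_cases h2 : L < 3 * s i
      · have hiM : i ∈ M := by
          rw [hMdef]; exact Finset.mem_filter.mpr ⟨Finset.mem_univ i, h2, by omega⟩
        rw [hff₀ i (Finset.mem_union_right _ hiM)]
        exact hmapsf₀ i (Finset.mem_union_right _ hiM)
      · have hiSm : i ∈ Sm := by
          rw [hSmdef]; exact Finset.mem_filter.mpr ⟨Finset.mem_univ i, by omega⟩
        rw [hfg i hiSm]
        exact hgmem i hiSm
  · intro t ht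
    have hsplit : ∑ i ∈ Finset.univ.filter (fun i => f i = t), s i
        = (∑ i ∈ (B ∪ M).filter (fun i => f i = t), s i)
          + ∑ i ∈ Sm.filter (fun i => f i = t), s i := by
      rw [← hcover, Finset.filter_union,
        Finset.sum_union (Finset.disjoint_filter_filter hdisj2)]
    have h1 : (B ∪ M).filter (fun i => f i = t) = (B ∪ M).filter (fun i => f₀ i = t) :=
      Finset.filter_congr (fun i hi => by rw [hff₀ i hi])
    have h2 : Sm.filter (fun i => f i = t) = Sm.filter (fun i => g i = t) :=
      Finset.filter_congr (fun i hi => by rw [hfg i hi])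
    rw [hsplit, h1, h2]
    have hbound := hg t ht
    have hwt : w t = ∑ i ∈ (B ∪ M).filter (fun i => f₀ i = t), s i := rfl
    omega
end

section
/- Let λ ≥ 1 be an integer and let π be a packing such that (i) vol(π) ≤ T · λ, (ii) π_{p,k} = 0 whenever p > λ, and (iii) the doubled λ-scale of π is at most 2T, i.e. 2·∑_{k=1}^K ∑_{p : 3p>2λ} π_{p,k} + ∑_{k=1}^K ∑_{p : λ<3p≤2λ} π_{p,k} ≤ 2T. Then there exists a schedule y such that ∑_{t=1}^T y_{p,k,t} = π_{p,k} for all p ∈ {1,…,P} and k ∈ {1,…,K} (so y is feasible whenever π satisfies all demands), and the load of y at every period t satisfies 3 · H_t ≤ 4λ. -/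
open Finset

namespace MB

def dlt (p k : ℕ) : ℕ → ℕ → ℕ := fun p' k' => if p' = p then if k' = k then 1 else 0 else 0

def S2 (K : ℕ) (S : Finset ℕ) (w : ℕ → ℕ) (f : ℕ → ℕ → ℕ) : ℕ :=
  ∑ k ∈ Finset.Icc 1 K, ∑ p ∈ S, w p * f p k

lemma S2_split {K : ℕ} {S : Finset ℕ} {w : ℕ → ℕ} {f g h : ℕ → ℕ → ℕ}
    (hfg : ∀ p k, f p k = g p k + h p k) :
    S2 K S w f = S2 K S w g + S2 K S w h := by
  unfold S2
  rw [← Finset.sum_add_distrib]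
  refine Finset.sum_congr rfl fun k _ => ?_
  rw [← Finset.sum_add_distrib]
  exact Finset.sum_congr rfl fun p _ => by rw [hfg, mul_add]

lemma S2_delta {K : ℕ} {S : Finset ℕ} {w : ℕ → ℕ} {p k : ℕ}
    (hp : p ∈ S) (hk : k ∈ Finset.Icc 1 K) :
    S2 K S w (dlt p k) = w p := by
  unfold S2 dlt
  simp only [mul_ite, mul_one, mul_zero]
  rw [Finset.sum_eq_single k]
  · rw [Finset.sum_eq_single p] <;> simp_all
  · intro b _ hb
    apply Finset.sum_eq_zero
    intro p' _
    simp [hb]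
  · simp_all

lemma S2_delta_not {K : ℕ} {S : Finset ℕ} {w : ℕ → ℕ} {p k : ℕ}
    (hp : p ∉ S) :
    S2 K S w (dlt p k) = 0 := by
  unfold S2 dlt
  apply Finset.sum_eq_zero
  intro k' _
  apply Finset.sum_eq_zero
  intro p' hp'
  have : p' ≠ p := fun h => hp (h ▸ hp')
  simp [this]

lemma S2_zero {K : ℕ} {S : Finset ℕ} {w : ℕ → ℕ} {f : ℕ → ℕ → ℕ}
    (h : ∀ p ∈ S, ∀ k ∈ Finset.Icc 1 K, f p k = 0) :
    S2 K S w f = 0 := by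
  unfold S2
  apply Finset.sum_eq_zero
  intro k hk
  apply Finset.sum_eq_zero
  intro p hp
  rw [h p hp k hk, mul_zero]

lemma S2_term_zero {K : ℕ} {S : Finset ℕ} {w : ℕ → ℕ} {f : ℕ → ℕ → ℕ}
    (h : S2 K S w f = 0) {p k : ℕ} (hp : p ∈ S) (hk : k ∈ Finset.Icc 1 K) :
    w p * f p k = 0 := by
  unfold S2 at h
  rw [Finset.sum_eq_zero_iff] at h
  have := h k hk
  rw [Finset.sum_eq_zero_iff] at this
  exact this p hp

lemma S2_exists {K : ℕ} {S : Finset ℕ} {w : ℕ → ℕ} {f : ℕ → ℕ → ℕ}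
    (h : S2 K S w f ≠ 0) :
    ∃ k ∈ Finset.Icc 1 K, ∃ p ∈ S, w p * f p k ≠ 0 := by
  obtain ⟨k, hk, h2⟩ := Finset.exists_ne_zero_of_sum_ne_zero h
  obtain ⟨p, hp, h3⟩ := Finset.exists_ne_zero_of_sum_ne_zero h2
  exact ⟨k, hk, p, hp, h3⟩


/-- Extract one item of kind `Q` from `f`. -/
lemma extract {K P : ℕ} {Q : ℕ → Prop} [DecidablePred Q] {f : ℕ → ℕ → ℕ}
    (h : S2 K ((Finset.Icc 1 P).filter Q) (fun _ => 1) f ≠ 0) :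
    ∃ (p k : ℕ) (f' : ℕ → ℕ → ℕ), p ∈ Finset.Icc 1 P ∧ k ∈ Finset.Icc 1 K ∧ Q p ∧
      (∀ p' k', f p' k' = f' p' k' + dlt p k p' k') := by
  obtain ⟨k, hk, p, hp, hne⟩ := S2_exists h
  rw [Finset.mem_filter] at hp
  refine ⟨p, k, fun p' k' => f p' k' - dlt p k p' k', hp.1, hk, hp.2, ?_⟩
  intro p' k'
  have : f p k ≠ 0 := by simpa using hne
  unfold dlt
  by_cases h1 : p' = p <;> by_cases h2 : k' = k <;> simp [h1, h2] <;> omega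

/-- Greedy selection: from `ρ` with all item sizes ≤ m and volume ≥ a, select a
sub-packing with volume in `[a, a+m-1]`. -/
lemma greedy (K P m : ℕ) : ∀ a (ρ : ℕ → ℕ → ℕ),
    (∀ p k, ρ p k ≠ 0 → p ≤ m) →
    a ≤ S2 K (Finset.Icc 1 P) id ρ →
    ∃ σ : ℕ → ℕ → ℕ, (∀ p k, σ p k ≤ ρ p k) ∧
      a ≤ S2 K (Finset.Icc 1 P) id σ ∧ S2 K (Finset.Icc 1 P) id σ ≤ a + m - 1 := by
  intro a
  induction a using Nat.strong_induction_on with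
  | _ a IH =>
    intro ρ hsz ha
    rcases Nat.eq_zero_or_pos a with rfl | hpos
    · refine ⟨fun _ _ => 0, fun _ _ => Nat.zero_le _, ?_, ?_⟩ <;>
        simp [S2]
    · have hne : S2 K (Finset.Icc 1 P) id ρ ≠ 0 := by omega
      obtain ⟨k, hk, p, hp, hterm⟩ := S2_exists hne
      have hρ : ρ p k ≠ 0 := by simpa using fun h => hterm (by simp [h])
      have hp1 : 1 ≤ p := by simpa using (Finset.mem_Icc.mp hp).1
      have hpm : p ≤ m := hsz p k hρ
      by_cases hap : a ≤ p
      · refine ⟨dlt p k, ?_, ?_, ?_⟩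
        · intro p' k'
          unfold dlt
          by_cases h1 : p' = p <;> by_cases h2 : k' = k <;> simp [h1, h2] <;> omega
        · rw [S2_delta hp hk]; exact hap
        · rw [S2_delta hp hk]; simp only [id]; omega
      · push_neg at hap
        set ρ' : ℕ → ℕ → ℕ := fun p' k' => ρ p' k' - dlt p k p' k' with hρ'def
        have hdec : ∀ p' k', ρ p' k' = ρ' p' k' + dlt p k p' k' := by
          intro p' k'
          simp only [hρ'def, dlt]
          by_cases h1 : p' = p <;> by_cases h2 : k' = k <;> simp [h1, h2] <;> omega
        have hvol : S2 K (Finset.Icc 1 P) id ρ = S2 K (Finset.Icc 1 P) id ρ' + p := by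
          rw [S2_split hdec, S2_delta hp hk]; rfl
        have hsz' : ∀ p' k', ρ' p' k' ≠ 0 → p' ≤ m := by
          intro p' k' h
          apply hsz p' k'
          have := hdec p' k'
          omega
        obtain ⟨σ', hle', hlo', hhi'⟩ := IH (a - p) (by omega) ρ' hsz' (by omega)
        refine ⟨fun p' k' => σ' p' k' + dlt p k p' k', ?_, ?_, ?_⟩
        · intro p' k'
          show σ' p' k' + dlt p k p' k' ≤ ρ p' k'
          have h1 := hle' p' k'
          have h2 := hdec p' k'
          omega
        · rw [S2_split (fun _ _ => rfl), S2_delta hp hk]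
          simp only [id] at *
          omega
        · rw [S2_split (fun _ _ => rfl), S2_delta hp hk]
          simp only [id] at *
          omega

def bigS (P L : ℕ) : Finset ℕ := (Finset.Icc 1 P).filter fun p => 2*L < 3*p
def medS (P L : ℕ) : Finset ℕ := (Finset.Icc 1 P).filter fun p => L < 3*p ∧ 3*p ≤ 2*L
def smallS (P L : ℕ) : Finset ℕ := (Finset.Icc 1 P).filter fun p => 3*p ≤ L
lemma mem_bigS {P L p : ℕ} : p ∈ bigS P L ↔ p ∈ Finset.Icc 1 P ∧ 2*L < 3*p := by
  simp [bigS]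
lemma mem_medS {P L p : ℕ} : p ∈ medS P L ↔ p ∈ Finset.Icc 1 P ∧ L < 3*p ∧ 3*p ≤ 2*L := by
  simp [medS]
lemma mem_smallS {P L p : ℕ} : p ∈ smallS P L ↔ p ∈ Finset.Icc 1 P ∧ 3*p ≤ L := by
  simp [smallS]

lemma step (K P L T : ℕ) (π : ℕ → ℕ → ℕ)
    (hmax : ∀ p ∈ Finset.Icc 1 P, ∀ k ∈ Finset.Icc 1 K, L < p → π p k = 0)
    (hscale : 2 * S2 K (bigS P L) (fun _ => 1) π + S2 K (medS P L) (fun _ => 1) π ≤ 2*(T+1))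
    (hvol : S2 K (Finset.Icc 1 P) id π ≤ (T+1)*L ∨ S2 K (smallS P L) id π = 0) :
    ∃ π' θ : ℕ → ℕ → ℕ,
      (∀ p k, π p k = π' p k + θ p k) ∧
      3 * S2 K (Finset.Icc 1 P) id θ ≤ 4*L ∧
      2 * S2 K (bigS P L) (fun _ => 1) π' + S2 K (medS P L) (fun _ => 1) π' ≤ 2*T ∧
      (S2 K (Finset.Icc 1 P) id π' ≤ T*L ∨ S2 K (smallS P L) id π' = 0) := by
  -- Stage A: extract the "seed" (one big item, or up to two medium items)
  have stageA : ∃ π₁ β : ℕ → ℕ → ℕ,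
      (∀ p k, π p k = π₁ p k + β p k) ∧
      3 * S2 K (Finset.Icc 1 P) id β ≤ 4*L ∧
      2 * S2 K (bigS P L) (fun _ => 1) π₁ + S2 K (medS P L) (fun _ => 1) π₁ ≤ 2*T ∧
      S2 K (smallS P L) id β = 0 := by
    by_cases hB : S2 K (bigS P L) (fun _ => 1) π = 0
    · by_cases hM : S2 K (medS P L) (fun _ => 1) π = 0
      · -- A4 : no big, no medium
        refine ⟨π, fun _ _ => 0, fun p k => (Nat.add_zero _).symm, ?_, by omega, ?_⟩
        · rw [S2_zero (fun _ _ _ _ => rfl)]; omega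
        · exact S2_zero (fun _ _ _ _ => rfl)
      · rw [show medS P L = (Finset.Icc 1 P).filter (fun p => L < 3*p ∧ 3*p ≤ 2*L) from rfl] at hM
        by_cases hM2 : 2 ≤ S2 K (medS P L) (fun _ => 1) π
        · -- A2 : no big, at least two mediums
          obtain ⟨p₁, k₁, πa, hp₁, hk₁, hmed₁, hpt₁⟩ := extract hM
          have e1 : S2 K (medS P L) (fun _ => 1) π
              = S2 K (medS P L) (fun _ => 1) πa + 1 := by
            rw [S2_split hpt₁, S2_delta (mem_medS.mpr ⟨hp₁, hmed₁⟩) hk₁]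
          have hMa : S2 K ((Finset.Icc 1 P).filter (fun p => L < 3*p ∧ 3*p ≤ 2*L)) (fun _ => 1) πa ≠ 0 := by
            rw [show (Finset.Icc 1 P).filter (fun p => L < 3*p ∧ 3*p ≤ 2*L) = medS P L from rfl]
            omega
          obtain ⟨p₂, k₂, π₁, hp₂, hk₂, hmed₂, hpt₂⟩ := extract hMa
          have e2 : S2 K (medS P L) (fun _ => 1) πa
              = S2 K (medS P L) (fun _ => 1) π₁ + 1 := by
            rw [S2_split hpt₂, S2_delta (mem_medS.mpr ⟨hp₂, hmed₂⟩) hk₂]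
          refine ⟨π₁, fun p k => dlt p₁ k₁ p k + dlt p₂ k₂ p k, ?_, ?_, ?_, ?_⟩
          · intro p k
            have h1 := hpt₁ p k
            have h2 := hpt₂ p k
            show π p k = π₁ p k + (dlt p₁ k₁ p k + dlt p₂ k₂ p k)
            omega
          · rw [S2_split (fun _ _ => rfl), S2_delta hp₁ hk₁, S2_delta hp₂ hk₂]
            simp only [id]; omega
          · have b1 : S2 K (bigS P L) (fun _ => 1) π
                = S2 K (bigS P L) (fun _ => 1) πa + 0 := by
              rw [S2_split hpt₁, S2_delta_not (fun h => by have := mem_bigS.mp h; omega)]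
            have b2 : S2 K (bigS P L) (fun _ => 1) πa
                = S2 K (bigS P L) (fun _ => 1) π₁ + 0 := by
              rw [S2_split hpt₂, S2_delta_not (fun h => by have := mem_bigS.mp h; omega)]
            omega
          · rw [S2_split (f := fun p k => dlt p₁ k₁ p k + dlt p₂ k₂ p k) (fun _ _ => rfl),
              S2_delta_not (w := id) (fun h => by have := mem_smallS.mp h; omega),
              S2_delta_not (w := id) (fun h => by have := mem_smallS.mp h; omega)]
        · -- A3 : no big, exactly one medium
          obtain ⟨p₁, k₁, π₁, hp₁, hk₁, hmed₁, hpt₁⟩ := extract hM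
          have e1 : S2 K (medS P L) (fun _ => 1) π
              = S2 K (medS P L) (fun _ => 1) π₁ + 1 := by
            rw [S2_split hpt₁, S2_delta (mem_medS.mpr ⟨hp₁, hmed₁⟩) hk₁]
          have b1 : S2 K (bigS P L) (fun _ => 1) π
              = S2 K (bigS P L) (fun _ => 1) π₁ + 0 := by
            rw [S2_split hpt₁, S2_delta_not (fun h => by have := mem_bigS.mp h; omega)]
          refine ⟨π₁, dlt p₁ k₁, hpt₁, ?_, by omega, ?_⟩
          · rw [S2_delta hp₁ hk₁]; simp only [id]; omega
          · exact S2_delta_not (w := id) (fun h => by have := mem_smallS.mp h; omega)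
    · -- A1 : a big item exists
      rw [show bigS P L = (Finset.Icc 1 P).filter (fun p => 2*L < 3*p) from rfl] at hB
      obtain ⟨p₀, k₀, π₁, hp₀, hk₀, hbig, hpt⟩ := extract hB
      have hpL : p₀ ≤ L := by
        by_contra h
        have h0 := hmax p₀ hp₀ k₀ hk₀ (by omega)
        have h1 := hpt p₀ k₀
        simp [dlt] at h1
        omega
      have e1 : S2 K (bigS P L) (fun _ => 1) π
          = S2 K (bigS P L) (fun _ => 1) π₁ + 1 := by
        rw [S2_split hpt, S2_delta (mem_bigS.mpr ⟨hp₀, hbig⟩) hk₀]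
      have e2 : S2 K (medS P L) (fun _ => 1) π
          = S2 K (medS P L) (fun _ => 1) π₁ + 0 := by
        rw [S2_split hpt, S2_delta_not (fun h => by have := mem_medS.mp h; omega)]
      refine ⟨π₁, dlt p₀ k₀, hpt, ?_, by omega, ?_⟩
      · rw [S2_delta hp₀ hk₀]; simp only [id]; omega
      · exact S2_delta_not (w := id) (fun h => by have := mem_smallS.mp h; omega)
  -- Stage B: fill with small items
  obtain ⟨π₁, β, hpt, h3v, hsc1, hsvβ⟩ := stageA
  have hsv : S2 K (smallS P L) id π = S2 K (smallS P L) id π₁ := by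
    rw [S2_split hpt, hsvβ]; omega
  have hvs : S2 K (Finset.Icc 1 P) id π
      = S2 K (Finset.Icc 1 P) id π₁ + S2 K (Finset.Icc 1 P) id β := S2_split hpt
  have hTL : (T+1)*L = T*L + L := by ring
  have hρπ₁ : ∀ p k, (fun p k => if 3*p ≤ L then π₁ p k else 0) p k ≤ π₁ p k := by
    intro p k
    by_cases h3 : 3*p ≤ L <;> simp [h3]
  have hρvol : S2 K (Finset.Icc 1 P) id (fun p k => if 3*p ≤ L then π₁ p k else 0)
      = S2 K (smallS P L) id π₁ := by
    simp [S2, smallS, Finset.sum_filter, mul_ite, mul_zero]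
  by_cases hv : L ≤ S2 K (Finset.Icc 1 P) id β
  · refine ⟨π₁, β, hpt, h3v, hsc1, ?_⟩
    rcases hvol with h | h
    · left; omega
    · right; rw [← hsv]; exact h
  · push_neg at hv
    by_cases hs : L - S2 K (Finset.Icc 1 P) id β ≤ S2 K (smallS P L) id π₁
    · -- B2 : enough smalls to top the period up to at least L
      have hvl : S2 K (Finset.Icc 1 P) id π ≤ (T+1)*L := by
        rcases hvol with h | h
        · exact h
        · rw [hsv] at h; omega
      have hρsz : ∀ p k, (fun p k => if 3*p ≤ L then π₁ p k else 0) p k ≠ 0 → p ≤ L/3 := by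
        intro p k h
        by_cases h3 : 3*p ≤ L
        · omega
        · simp [h3] at h
      obtain ⟨σ, hσle, hσlo, hσhi⟩ := greedy K P (L/3) (L - S2 K (Finset.Icc 1 P) id β)
        (fun p k => if 3*p ≤ L then π₁ p k else 0) hρsz (by rw [hρvol]; exact hs)
      have hσπ₁ : ∀ p k, σ p k ≤ π₁ p k := fun p k => le_trans (hσle p k) (hρπ₁ p k)
      have hσsm : ∀ p k, ¬ (3*p ≤ L) → σ p k = 0 := by
        intro p k h3
        have := hσle p k
        simp [h3] at this
        omega
      have hpt' : ∀ p k, π p k = (π₁ p k - σ p k) + (β p k + σ p k) := by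
        intro p k
        have h1 := hpt p k
        have h2 := hσπ₁ p k
        omega
      have hθ : S2 K (Finset.Icc 1 P) id (fun p k => β p k + σ p k)
          = S2 K (Finset.Icc 1 P) id β + S2 K (Finset.Icc 1 P) id σ :=
        S2_split (fun _ _ => rfl)
      have hπ₁s : ∀ (S : Finset ℕ) (w : ℕ → ℕ),
          S2 K S w π₁ = S2 K S w (fun p k => π₁ p k - σ p k) + S2 K S w σ :=
        fun S w => S2_split (fun p k => by have := hσπ₁ p k; omega)
      have hbσ : S2 K (bigS P L) (fun _ => 1) σ = 0 :=
        S2_zero (fun p hp k _ => hσsm p k (by have := mem_bigS.mp hp; omega))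
      have hmσ : S2 K (medS P L) (fun _ => 1) σ = 0 :=
        S2_zero (fun p hp k _ => hσsm p k (by have := mem_medS.mp hp; omega))
      refine ⟨fun p k => π₁ p k - σ p k, fun p k => β p k + σ p k, hpt', ?_, ?_, ?_⟩
      · rw [hθ]; omega
      · have b := hπ₁s (bigS P L) (fun _ => 1)
        have m := hπ₁s (medS P L) (fun _ => 1)
        rw [hbσ] at b; rw [hmσ] at m
        omega
      · left
        have v := hπ₁s (Finset.Icc 1 P) id
        omega
    · -- B3 : put all remaining smalls into the period
      push_neg at hs
      have hρsm : ∀ p k, ¬ (3*p ≤ L) → (fun p k => if 3*p ≤ L then π₁ p k else 0) p k = 0 := by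
        intro p k h3
        simp [h3]
      have hpt' : ∀ p k, π p k
          = (π₁ p k - (if 3*p ≤ L then π₁ p k else 0)) + (β p k + (if 3*p ≤ L then π₁ p k else 0)) := by
        intro p k
        have h1 := hpt p k
        have h2 := hρπ₁ p k
        simp only at h2
        omega
      have hθ : S2 K (Finset.Icc 1 P) id (fun p k => β p k + (if 3*p ≤ L then π₁ p k else 0))
          = S2 K (Finset.Icc 1 P) id β
            + S2 K (Finset.Icc 1 P) id (fun p k => if 3*p ≤ L then π₁ p k else 0) :=
        S2_split (fun _ _ => rfl)
      have hπ₁s : ∀ (S : Finset ℕ) (w : ℕ → ℕ),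
          S2 K S w π₁ = S2 K S w (fun p k => π₁ p k - (if 3*p ≤ L then π₁ p k else 0))
            + S2 K S w (fun p k => if 3*p ≤ L then π₁ p k else 0) :=
        fun S w => S2_split (fun p k => by have := hρπ₁ p k; simp only at this; omega)
      have hbρ : S2 K (bigS P L) (fun _ => 1) (fun p k => if 3*p ≤ L then π₁ p k else 0) = 0 :=
        S2_zero (fun p hp k _ => hρsm p k (by have := mem_bigS.mp hp; omega))
      have hmρ : S2 K (medS P L) (fun _ => 1) (fun p k => if 3*p ≤ L then π₁ p k else 0) = 0 :=
        S2_zero (fun p hp k _ => hρsm p k (by have := mem_medS.mp hp; omega))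
      refine ⟨fun p k => π₁ p k - (if 3*p ≤ L then π₁ p k else 0),
        fun p k => β p k + (if 3*p ≤ L then π₁ p k else 0), hpt', ?_, ?_, ?_⟩
      · rw [hθ, hρvol]; omega
      · have b := hπ₁s (bigS P L) (fun _ => 1)
        have m := hπ₁s (medS P L) (fun _ => 1)
        rw [hbρ] at b; rw [hmρ] at m
        omega
      · right
        apply S2_zero
        intro p hp k _
        have h3 := (mem_smallS.mp hp).2
        simp [h3]

lemma main (K P L : ℕ) : ∀ T (π : ℕ → ℕ → ℕ),
    (∀ p ∈ Finset.Icc 1 P, ∀ k ∈ Finset.Icc 1 K, L < p → π p k = 0) →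
    2 * S2 K (bigS P L) (fun _ => 1) π + S2 K (medS P L) (fun _ => 1) π ≤ 2*T →
    (S2 K (Finset.Icc 1 P) id π ≤ T*L ∨ S2 K (smallS P L) id π = 0) →
    ∃ y : ℕ → ℕ → ℕ → ℕ,
      (∀ p ∈ Finset.Icc 1 P, ∀ k ∈ Finset.Icc 1 K, ∑ t ∈ Finset.Icc 1 T, y p k t = π p k) ∧
      (∀ t ∈ Finset.Icc 1 T, 3 * S2 K (Finset.Icc 1 P) id (fun p k => y p k t) ≤ 4*L) := by
  intro T
  induction T with
  | zero =>
    intro π hmax hscale hvol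
    refine ⟨fun _ _ _ => 0, ?_, ?_⟩
    · intro p hp k hk
      have hp1 : 1 ≤ p := (Finset.mem_Icc.mp hp).1
      have hB0 : S2 K (bigS P L) (fun _ => 1) π = 0 := by omega
      have hM0 : S2 K (medS P L) (fun _ => 1) π = 0 := by omega
      have hz : π p k = 0 := by
        by_cases hb : 2*L < 3*p
        · have h := S2_term_zero hB0 (mem_bigS.mpr ⟨hp, hb⟩) hk
          simpa using h
        · by_cases hm : L < 3*p
          · have h := S2_term_zero hM0 (mem_medS.mpr ⟨hp, by omega⟩) hk
            simpa using h
          · rcases hvol with h | h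
            · have hV0 : S2 K (Finset.Icc 1 P) id π = 0 := by omega
              have h2 := S2_term_zero hV0 hp hk
              simp only [id] at h2
              rcases Nat.mul_eq_zero.mp h2 with h3 | h3 <;> omega
            · have h2 := S2_term_zero h (mem_smallS.mpr ⟨hp, by omega⟩) hk
              simp only [id] at h2
              rcases Nat.mul_eq_zero.mp h2 with h3 | h3 <;> omega
      simp [hz]
    · intro t ht
      have := Finset.mem_Icc.mp ht
      omega
  | succ T IH =>
    intro π hmax hscale hvol
    obtain ⟨π', θ, hpt, hθ, hsc', hvol'⟩ := step K P L T π hmax hscale hvol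
    have hmax' : ∀ p ∈ Finset.Icc 1 P, ∀ k ∈ Finset.Icc 1 K, L < p → π' p k = 0 := by
      intro p hp k hk h
      have h1 := hmax p hp k hk h
      have h2 := hpt p k
      omega
    obtain ⟨y', hy1, hy2⟩ := IH π' hmax' hsc' hvol'
    refine ⟨fun p k t => if t = T+1 then θ p k else y' p k t, ?_, ?_⟩
    · intro p hp k hk
      rw [Finset.sum_Icc_succ_top (by omega : 1 ≤ T+1)]
      simp only [if_pos rfl]
      have he : ∑ t ∈ Finset.Icc 1 T, (if t = T+1 then θ p k else y' p k t)
          = ∑ t ∈ Finset.Icc 1 T, y' p k t :=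
        Finset.sum_congr rfl (fun t ht => if_neg (by have := Finset.mem_Icc.mp ht; omega))
      rw [he, hy1 p hp k hk]
      exact (hpt p k).symm
    · intro t ht
      by_cases hT1 : t = T+1
      · subst hT1
        have he : (fun p k => if (T+1 : ℕ) = T+1 then θ p k else y' p k (T+1)) = θ := by
          funext p k; simp
        rw [he]
        exact hθ
      · have he : (fun p k => if t = T+1 then θ p k else y' p k t)
            = fun p k => y' p k t := by
          funext p k; simp [hT1]
        rw [he]
        exact hy2 t (Finset.mem_Icc.mpr ⟨(Finset.mem_Icc.mp ht).1,
          by have := (Finset.mem_Icc.mp ht).2; omega⟩)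

end MB




/-- A packing with volume at most `T * L`, with no configuration larger
than `L` and doubled `L`-scale at most `2T`, can be scheduled into `T` periods with
every period load at most `4L/3`. -/
theorem packing_schedulable_small_H
    (K P T L : ℕ) (hK : 1 ≤ K) (hP : 1 ≤ P) (hT : 1 ≤ T) (hL : 1 ≤ L)
    (pi : ℕ → ℕ → ℕ)
    (hvol : ∑ k ∈ Finset.Icc 1 K, ∑ p ∈ Finset.Icc 1 P, p * pi p k ≤ T * L)
    (hmax : ∀ p ∈ Finset.Icc 1 P, ∀ k ∈ Finset.Icc 1 K, L < p → pi p k = 0)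
    (hscale : 2 * (∑ k ∈ Finset.Icc 1 K,
          ∑ p ∈ (Finset.Icc 1 P).filter (fun p => 2 * L < 3 * p), pi p k)
        + (∑ k ∈ Finset.Icc 1 K,
          ∑ p ∈ (Finset.Icc 1 P).filter (fun p => L < 3 * p ∧ 3 * p ≤ 2 * L), pi p k)
        ≤ 2 * T) :
    ∃ y : ℕ → ℕ → ℕ → ℕ,
      (∀ p ∈ Finset.Icc 1 P, ∀ k ∈ Finset.Icc 1 K,
        ∑ t ∈ Finset.Icc 1 T, y p k t = pi p k) ∧
      (∀ t ∈ Finset.Icc 1 T,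
        3 * (∑ k ∈ Finset.Icc 1 K, ∑ p ∈ Finset.Icc 1 P, p * y p k t) ≤ 4 * L) := by
  obtain ⟨y, h1, h2⟩ := MB.main K P L T pi hmax
    (by simpa [MB.S2, MB.bigS, MB.medS] using hscale)
    (Or.inl (by simpa [MB.S2] using hvol))
  refine ⟨y, h1, fun t ht => ?_⟩
  have := h2 t ht
  simpa [MB.S2] using this
end

section
/- Let π be a packing, let V = vol(π) = ∑_{k=1}^K ∑_{p=1}^P p · π_{p,k}, and assume V > 3·P·T with T ≥ 1. For each p ∈ {1,…,P} set α_p = ⌊V / (3pT)⌋. Then: (i) α_p ≥ 1 for every p ∈ {1,…,P}; (ii) 3T · p · α_p ≤ V for every p, and consequently if moreover V ≤ T · H for some integer H, then 3 · p · α_p ≤ H (every block of α_p many p-resources has size at most H/3); (iii) for every p ∈ {1,…,P} and k ∈ {1,…,K}, ⌊π_{p,k} / α_p⌋ ≤ 6T, and hence the total number of items created, ∑_{p=1}^P ∑_{k=1}^K (⌊π_{p,k}/α_p⌋ + 1), is at most P·K·(6T + 1); and (iv) the total size is preserved: ∑_{p=1}^P ∑_{k=1}^K ( p·α_p·⌊π_{p,k}/α_p⌋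 + p·(π_{p,k} − α_p·⌊π_{p,k}/α_p⌋) ) = V. -/
/-- Lemma 2 of the paper: properties of the block transformation of a
packing of volume `V > 3PT`, with `α_p = ⌊V / (3pT)⌋`. -/
theorem block_transformation_properties
    (K P T : ℕ) (hK : 1 ≤ K) (hP : 1 ≤ P) (hT : 1 ≤ T)
    (pi : ℕ → ℕ → ℕ) (V : ℕ)
    (hV : V = ∑ k ∈ Finset.Icc 1 K, ∑ p ∈ Finset.Icc 1 P, p * pi p k)
    (hbig : 3 * P * T < V) :
    (∀ p ∈ Finset.Icc 1 P, 1 ≤ V / (3 * p * T)) ∧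
    (∀ p ∈ Finset.Icc 1 P,
      3 * T * (p * (V / (3 * p * T))) ≤ V ∧
      ∀ H : ℕ, V ≤ T * H → 3 * (p * (V / (3 * p * T))) ≤ H) ∧
    ((∀ p ∈ Finset.Icc 1 P, ∀ k ∈ Finset.Icc 1 K,
        pi p k / (V / (3 * p * T)) ≤ 6 * T) ∧
      ∑ p ∈ Finset.Icc 1 P, ∑ k ∈ Finset.Icc 1 K,
          (pi p k / (V / (3 * p * T)) + 1) ≤ P * K * (6 * T + 1)) ∧
    (∑ p ∈ Finset.Icc 1 P, ∑ k ∈ Finset.Icc 1 K,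
        (p * (V / (3 * p * T)) * (pi p k / (V / (3 * p * T)))
          + p * (pi p k - (V / (3 * p * T)) * (pi p k / (V / (3 * p * T)))))
      = V) := by
  -- basic facts
  have halpha : ∀ p ∈ Finset.Icc 1 P, 1 ≤ V / (3 * p * T) := by
    intro p hp
    rw [Finset.mem_Icc] at hp
    have hle : 3 * p * T ≤ V := by nlinarith [hp.1, hp.2]
    have hpos : 0 < 3 * p * T := Nat.mul_pos (Nat.mul_pos (by norm_num) hp.1) hT
    exact (Nat.one_le_div_iff hpos).2 hle
  have hdiv : ∀ p ∈ Finset.Icc 1 P, 3 * T * (p * (V / (3 * p * T))) ≤ V := by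
    intro p hp
    have := Nat.div_mul_le_self V (3 * p * T)
    calc 3 * T * (p * (V / (3 * p * T))) = V / (3 * p * T) * (3 * p * T) := by ring
      _ ≤ V := this
  have hterm : ∀ p ∈ Finset.Icc 1 P, ∀ k ∈ Finset.Icc 1 K, p * pi p k ≤ V := by
    intro p hp k hk
    rw [hV]
    calc p * pi p k ≤ ∑ p ∈ Finset.Icc 1 P, p * pi p k := by
          exact Finset.single_le_sum (f := fun p => p * pi p k) (fun i _ => Nat.zero_le _) hp
      _ ≤ ∑ k ∈ Finset.Icc 1 K, ∑ p ∈ Finset.Icc 1 P, p * pi p k := by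
          exact Finset.single_le_sum (f := fun k => ∑ p ∈ Finset.Icc 1 P, p * pi p k)
            (fun i _ => Nat.zero_le _) hk
  have hq : ∀ p ∈ Finset.Icc 1 P, ∀ k ∈ Finset.Icc 1 K,
      pi p k / (V / (3 * p * T)) ≤ 6 * T := by
    intro p hp k hk
    have h1 := halpha p hp
    have h2 := hterm p hp k hk
    rw [Finset.mem_Icc] at hp
    set a := V / (3 * p * T) with ha
    have hpos : 0 < 3 * p * T := Nat.mul_pos (Nat.mul_pos (by norm_num) hp.1) hT
    have hdm := Nat.div_add_mod V (3 * p * T)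
    rw [← ha] at hdm
    have hmlt := Nat.mod_lt V hpos
    have hVlt : V < (a + 1) * (3 * p * T) := by nlinarith
    have hkey : p * pi p k < p * ((6 * T + 1) * a) := by nlinarith [hp.1]
    have : pi p k < (6 * T + 1) * a := Nat.lt_of_mul_lt_mul_left hkey
    have := (Nat.div_lt_iff_lt_mul h1).2 this
    omega
  refine ⟨halpha, ?_, ⟨hq, ?_⟩, ?_⟩
  · intro p hp
    refine ⟨hdiv p hp, ?_⟩
    intro H hH
    have h1 := hdiv p hp
    have h2 : T * (3 * (p * (V / (3 * p * T)))) ≤ T * H := by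
      calc T * (3 * (p * (V / (3 * p * T)))) = 3 * T * (p * (V / (3 * p * T))) := by ring
        _ ≤ V := h1
        _ ≤ T * H := hH
    exact Nat.le_of_mul_le_mul_left h2 hT
  · calc ∑ p ∈ Finset.Icc 1 P, ∑ k ∈ Finset.Icc 1 K, (pi p k / (V / (3 * p * T)) + 1)
        ≤ ∑ p ∈ Finset.Icc 1 P, ∑ k ∈ Finset.Icc 1 K, (6 * T + 1) := by
          refine Finset.sum_le_sum fun p hp => Finset.sum_le_sum fun k hk => ?_
          have := hq p hp k hk
          omega
      _ = P * K * (6 * T + 1) := by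
          simp [Finset.sum_const, Nat.card_Icc, mul_assoc]
  · have : ∀ p ∈ Finset.Icc 1 P, ∀ k ∈ Finset.Icc 1 K,
        p * (V / (3 * p * T)) * (pi p k / (V / (3 * p * T)))
          + p * (pi p k - (V / (3 * p * T)) * (pi p k / (V / (3 * p * T))))
        = p * pi p k := by
      intro p hp k hk
      have h : (V / (3 * p * T)) * (pi p k / (V / (3 * p * T))) ≤ pi p k :=
        Nat.mul_div_le (pi p k) (V / (3 * p * T))
      rw [mul_assoc, ← Nat.mul_add, Nat.add_sub_cancel' h]
    rw [Finset.sum_congr rfl (fun p hp => Finset.sum_congr rfl (this p hp))]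
    rw [hV, Finset.sum_comm]
end

section
/- (Single-period structure of minimum-volume packings.) Let p0 : {1,…,K} → {1,…,P} satisfy c_{p0(k),k} · p ≥ c_{p,k} · p0(k) for all p ∈ {1,…,P} and k ∈ {1,…,K}, and assume c_{p0(k),k} ≥ 1 for every k. Then there exists a packing π satisfying all demands such that (i) π has minimum volume among all demand-satisfying packings, i.e. vol(π) ≤ vol(ρ) for every packing ρ satisfying all demands, and (ii) for every k and every p ≠ p0(k), π_{p,k} ≤ p0(k); consequently, for every k, the volume of π used by non-optimal configurations for type k satisfies ∑_{p ≠ p0(k)} p · π_{p,k} ≤ p0(k) · P·(P+1)/2. -/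
section Aux

private lemma split_two_sum {s : Finset ℕ} {a b : ℕ} (ha : a ∈ s) (hb : b ∈ s)
    (hab : a ≠ b) (f : ℕ → ℕ) :
    ∑ q ∈ s, f q = f a + f b + ∑ q ∈ (s.erase a).erase b, f q := by
  rw [← Finset.add_sum_erase s f ha,
    ← Finset.add_sum_erase (s.erase a) f (Finset.mem_erase.mpr ⟨hab.symm, hb⟩), add_assoc]

private lemma gauss_icc (n : ℕ) : (∑ i ∈ Finset.Icc 1 n, i) = n * (n + 1) / 2 := by
  have h : (∑ i ∈ Finset.Icc 1 n, i) * 2 = n * (n + 1) := by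
    induction n with
    | zero => simp
    | succ m ih =>
      rw [Finset.sum_Icc_succ_top (by omega : 1 ≤ m + 1)]
      nlinarith [ih]
  omega

end Aux

/-- there is a minimum-volume demand-satisfying packing which uses at most
`p0 k` many `p`-resources for each non-optimal configuration `p ≠ p0 k`, hence whose
volume on non-optimal configurations is at most `p0 k * P(P+1)/2` for each type `k`. -/
theorem single_period_optimal_packing_structure
    (K P : ℕ) (hK : 1 ≤ K) (hP : 1 ≤ P)
    (c : ℕ → ℕ → ℕ) (d : ℕ → ℕ)
    (p0 : ℕ → ℕ)
    (hp0mem : ∀ k ∈ Finset.Icc 1 K, p0 k ∈ Finset.Icc 1 P)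
    (hp0opt : ∀ k ∈ Finset.Icc 1 K, ∀ p ∈ Finset.Icc 1 P,
      c p k * p0 k ≤ c (p0 k) k * p)
    (hpos : ∀ k ∈ Finset.Icc 1 K, 1 ≤ c (p0 k) k) :
    ∃ pi : ℕ → ℕ → ℕ,
      (∀ k ∈ Finset.Icc 1 K, d k ≤ ∑ p ∈ Finset.Icc 1 P, c p k * pi p k) ∧
      (∀ rho : ℕ → ℕ → ℕ,
        (∀ k ∈ Finset.Icc 1 K, d k ≤ ∑ p ∈ Finset.Icc 1 P, c p k * rho p k) →
        ∑ k ∈ Finset.Icc 1 K, ∑ p ∈ Finset.Icc 1 P, p * pi p k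
          ≤ ∑ k ∈ Finset.Icc 1 K, ∑ p ∈ Finset.Icc 1 P, p * rho p k) ∧
      (∀ k ∈ Finset.Icc 1 K, ∀ p ∈ Finset.Icc 1 P, p ≠ p0 k → pi p k ≤ p0 k) ∧
      (∀ k ∈ Finset.Icc 1 K,
        ∑ p ∈ (Finset.Icc 1 P).filter (fun p => p ≠ p0 k), p * pi p k
          ≤ p0 k * (P * (P + 1) / 2)) := by
  classical
  set Pred : (ℕ → ℕ → ℕ) → Prop :=
    fun π => ∀ k ∈ Finset.Icc 1 K, d k ≤ ∑ p ∈ Finset.Icc 1 P, c p k * π p k with hPredDef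
  set vol : (ℕ → ℕ → ℕ) → ℕ :=
    fun π => ∑ k ∈ Finset.Icc 1 K, ∑ p ∈ Finset.Icc 1 P, p * π p k with hvolDef
  set sec : (ℕ → ℕ → ℕ) → ℕ :=
    fun π => ∑ k ∈ Finset.Icc 1 K,
      ∑ p ∈ (Finset.Icc 1 P).filter (fun p => p ≠ p0 k), π p k with hsecDef
  -- there is a demand-satisfying packing
  have hex : ∃ v, ∃ π, Pred π ∧ vol π = v := by
    refine ⟨_, fun p k => if p = p0 k then d k else 0, ?_, rfl⟩
    intro k hk
    have hp0 := hp0mem k hk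
    calc d k ≤ c (p0 k) k * d k := Nat.le_mul_of_pos_left _ (hpos k hk)
      _ = c (p0 k) k * (if p0 k = p0 k then d k else 0) := by simp
      _ ≤ _ := Finset.single_le_sum
          (f := fun p => c p k * (if p = p0 k then d k else 0))
          (fun _ _ => Nat.zero_le _) hp0
  -- minimize volume
  set V := Nat.find hex with hV
  have hVspec := Nat.find_spec hex
  have hex2 : ∃ s, ∃ π, Pred π ∧ vol π = V ∧ sec π = s := by
    obtain ⟨π, h1, h2⟩ := hVspec
    exact ⟨sec π, π, h1, h2, rfl⟩
  set S := Nat.find hex2 with hS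
  obtain ⟨π, hPredπ, hvolπ, hsecπ⟩ := Nat.find_spec hex2
  -- key structural property
  have hkey : ∀ k ∈ Finset.Icc 1 K, ∀ p ∈ Finset.Icc 1 P, p ≠ p0 k → π p k ≤ p0 k := by
    intro k hk p hp hne
    by_contra hgt
    push_neg at hgt
    have hp0m := hp0mem k hk
    have hp0pos : 1 ≤ p0 k := (Finset.mem_Icc.mp hp0m).1
    obtain ⟨y, hy⟩ : ∃ y, π p k = y + p0 k := ⟨π p k - p0 k, by omega⟩
    set π' : ℕ → ℕ → ℕ := fun q j =>
      if j = k ∧ q = p then y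
      else if j = k ∧ q = p0 k then π (p0 k) k + p
      else π q j with hπ'Def
    have hπ'p : π' p k = y := by simp [hπ'Def]
    have hπ'p0 : π' (p0 k) k = π (p0 k) k + p := by
      simp [hπ'Def, Ne.symm hne]
    have hπ'other : ∀ q, q ≠ p → q ≠ p0 k → π' q k = π q k := by
      intro q h1 h2; simp [hπ'Def, h1, h2]
    have hπ'row : ∀ q j, j ≠ k → π' q j = π q j := by
      intro q j hj; simp [hπ'Def, hj]
    -- π' satisfies the demands
    have hPred' : Pred π' := by
      intro j hj
      by_cases hjk : j = k
      · subst hjk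
        rw [split_two_sum hp hp0m hne]
        have := hPredπ j hj
        rw [split_two_sum hp hp0m hne] at this
        have hrest : ∑ q ∈ ((Finset.Icc 1 P).erase p).erase (p0 j), c q j * π' q j
            = ∑ q ∈ ((Finset.Icc 1 P).erase p).erase (p0 j), c q j * π q j := by
          refine Finset.sum_congr rfl fun q hq => ?_
          rw [hπ'other q (Finset.mem_erase.mp (Finset.mem_erase.mp hq).2).1
            (Finset.mem_erase.mp hq).1]
        rw [hπ'p, hπ'p0, hrest]
        have hopt := hp0opt j hj p hp
        rw [hy] at this
        nlinarith [this, hopt]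
      · have : ∑ q ∈ Finset.Icc 1 P, c q j * π' q j
            = ∑ q ∈ Finset.Icc 1 P, c q j * π q j := by
          refine Finset.sum_congr rfl fun q _ => by rw [hπ'row q j hjk]
        rw [this]; exact hPredπ j hj
    -- π' has the same volume
    have hvol' : vol π' = vol π := by
      refine Finset.sum_congr rfl fun j hj => ?_
      by_cases hjk : j = k
      · subst hjk
        rw [split_two_sum hp hp0m hne, split_two_sum hp hp0m hne]
        have hrest : ∑ q ∈ ((Finset.Icc 1 P).erase p).erase (p0 j), q * π' q j
            = ∑ q ∈ ((Finset.Icc 1 P).erase p).erase (p0 j), q * π q j := by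
          refine Finset.sum_congr rfl fun q hq => ?_
          rw [hπ'other q (Finset.mem_erase.mp (Finset.mem_erase.mp hq).2).1
            (Finset.mem_erase.mp hq).1]
        rw [hπ'p, hπ'p0, hrest, hy]
        ring_nf
      · refine Finset.sum_congr rfl fun q _ => by rw [hπ'row q j hjk]
    -- π' has strictly smaller secondary measure
    have hsec' : sec π' < sec π := by
      rw [hsecDef]
      simp only
      rw [← Finset.add_sum_erase _ _ hk, ← Finset.add_sum_erase _ _ hk]
      have hrest : ∑ j ∈ (Finset.Icc 1 K).erase k,
          ∑ q ∈ (Finset.Icc 1 P).filter (fun q => q ≠ p0 j), π' q j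
          = ∑ j ∈ (Finset.Icc 1 K).erase k,
          ∑ q ∈ (Finset.Icc 1 P).filter (fun q => q ≠ p0 j), π q j := by
        refine Finset.sum_congr rfl fun j hj => Finset.sum_congr rfl fun q _ => ?_
        exact hπ'row q j (Finset.mem_erase.mp hj).1
      rw [hrest]
      apply Nat.add_lt_add_right
      have hpf : p ∈ (Finset.Icc 1 P).filter (fun q => q ≠ p0 k) :=
        Finset.mem_filter.mpr ⟨hp, hne⟩
      rw [← Finset.add_sum_erase _ _ hpf, ← Finset.add_sum_erase _ _ hpf]
      have hrest2 : ∑ q ∈ (((Finset.Icc 1 P).filter (fun q => q ≠ p0 k)).erase p), π' q k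
          = ∑ q ∈ (((Finset.Icc 1 P).filter (fun q => q ≠ p0 k)).erase p), π q k := by
        refine Finset.sum_congr rfl fun q hq => ?_
        obtain ⟨hq1, hq2⟩ := Finset.mem_erase.mp hq
        exact hπ'other q hq1 (Finset.mem_filter.mp hq2).2
      rw [hrest2, hπ'p, hy]
      omega
    have hmin := Nat.find_min' hex2 ⟨π', hPred', by rw [hvol', hvolπ], rfl⟩
    omega
  refine ⟨π, hPredπ, ?_, hkey, ?_⟩
  · intro rho hrho
    have : V ≤ vol rho := Nat.find_min' hex ⟨rho, hrho, rfl⟩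
    calc ∑ k ∈ Finset.Icc 1 K, ∑ p ∈ Finset.Icc 1 P, p * π p k = vol π := rfl
      _ ≤ vol rho := by omega
      _ = _ := rfl
  · intro k hk
    have hp0m := hp0mem k hk
    calc ∑ p ∈ (Finset.Icc 1 P).filter (fun p => p ≠ p0 k), p * π p k
        ≤ ∑ p ∈ (Finset.Icc 1 P).filter (fun p => p ≠ p0 k), p * p0 k := by
          refine Finset.sum_le_sum fun p hp => ?_
          obtain ⟨hp1, hp2⟩ := Finset.mem_filter.mp hp
          exact Nat.mul_le_mul_left p (hkey k hk p hp1 hp2)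
      _ ≤ ∑ p ∈ Finset.Icc 1 P, p * p0 k :=
          Finset.sum_le_sum_of_subset (Finset.filter_subset _ _)
      _ = (∑ p ∈ Finset.Icc 1 P, p) * p0 k := (Finset.sum_mul _ _ _).symm
      _ = p0 k * (P * (P + 1) / 2) := by rw [gauss_icc, mul_comm]
end
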